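/- arXiv:2002.06309 — 6 statements merged into one kernel-verified Lean document; each statement's English description precedes it below -/
import Mathlib

section
/- (Three-point inequality.) Let f : ℝ^d → ℝ be ρ-weakly convex and let X ⊆ ℝ^d be a closed, R-proximally smooth set. Suppose f is L-Lipschitz continuous on an open set U containing X. Fix β > ρ + 3L/R and a point x ∈ X, and let x̃ ∈ X be a minimizer of y ↦ f(y) + (β/2)‖y − x‖² over X. Then for every y ∈ X: f(y) − f(x̃) ≥ ((β − ρ − 3L/R)/2)‖y − x̃‖² + (β/2)‖x − x̃‖² − (β/2)‖y − x‖². -/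
open Metric Set Filter Topology
open scoped RealInnerProductSpace

section Auxiliary

variable {E : Type*} [NormedAddCommGroup E] [InnerProductSpace ℝ E] [ProperSpace E]

set_option linter.unusedSectionVars false

set_option maxHeartbeats 1000000 in
lemma prop_step {X : Set E} (hXc : IsClosed X) {R : ℝ}
    (huniq : ∀ u : E, infDist u X < R →
      ∃! p : E, p ∈ X ∧ dist u p = infDist u X)
    {p u : E} {r ρ : ℝ} (hp : p ∈ X) (hdist : dist u p = r) (hinf : infDist u X = r)
    (hr0 : 0 < r) (hρ0 : 0 < ρ) (hρr : ρ < r) (hrR : r + ρ < R) :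
    infDist (u + (ρ/r) • (u - p)) X = r + ρ ∧ dist (u + (ρ/r) • (u - p)) p = r + ρ := by
  have hne : X.Nonempty := ⟨p, hp⟩
  obtain ⟨v, hvB, hvmax⟩ : ∃ v ∈ closedBall u ρ, IsMaxOn (fun z => infDist z X) (closedBall u ρ) v :=
    (isCompact_closedBall u ρ).exists_isMaxOn ⟨u, mem_closedBall_self hρ0.le⟩
      (continuous_infDist_pt X).continuousOn
  set dv := infDist v X with hdv
  have hrdv : r ≤ dv := by
    have := hvmax (mem_closedBall_self hρ0.le)
    simpa [hinf] using this
  have hdv0 : 0 < dv := lt_of_lt_of_le hr0 hrdv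
  have hvu : dist v u ≤ ρ := mem_closedBall.1 hvB
  have hdvle : dv ≤ r + ρ := by
    have h1 : infDist v X ≤ dist v p := infDist_le_dist_of_mem hp
    have h2 : dist v p ≤ dist v u + dist u p := dist_triangle v u p
    simp only [hdist] at h2
    linarith
  have hdvR : dv < R := lt_of_le_of_lt hdvle hrR
  obtain ⟨q, hqX, hqd⟩ := hXc.exists_infDist_eq_dist hne v
  -- key variational inequality
  have key : ∀ w ∈ closedBall u ρ, ⟪w - v, v - q⟫ ≤ 0 := by
    intro w hwB
    set t : ℕ → ℝ := fun n => (1 : ℝ) / (n + 1) with ht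
    have ht0 : ∀ n, 0 < t n := fun n => by positivity
    have ht1 : ∀ n, t n ≤ 1 := fun n => by
      rw [ht]; rw [div_le_one (by positivity)]
      have : (0:ℝ) ≤ n := Nat.cast_nonneg n
      linarith
    set z : ℕ → E := fun n => v + t n • (w - v) with hz
    have hzB : ∀ n, z n ∈ closedBall u ρ := by
      intro n
      have hcomb := (convex_closedBall u ρ) hvB hwB (by linarith [ht1 n, ht0 n] : (0:ℝ) ≤ 1 - t n)
        (ht0 n).le (by ring)
      have he : (1 - t n) • v + t n • w = v + t n • (w - v) := by module
      rwa [he] at hcomb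
    have hzv : ∀ n, z n - v = t n • (w - v) := by
      intro n; show v + t n • (w - v) - v = t n • (w - v); exact add_sub_cancel_left v _
    have hex := fun n => hXc.exists_infDist_eq_dist hne (z n)
    choose y hyX hyd using hex
    have hineq : ∀ n, ⟪w - v, z n - y n⟫ ≤ t n * ‖w - v‖ ^ 2 / 2 := by
      intro n
      have h1 : dv ≤ dist v (y n) := by
        rw [hdv]; exact infDist_le_dist_of_mem (hyX n)
      have h2 : dist (z n) (y n) ≤ dv := by
        rw [← hyd n]; exact hvmax (hzB n)
      have e1 : ‖v - y n‖ ^ 2 = ‖z n - y n‖ ^ 2 - 2 * ⟪z n - v, z n - y n⟫ + ‖z n - v‖ ^ 2 := by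
        have hv : v - y n = (z n - y n) - (z n - v) := by abel
        rw [hv, norm_sub_sq_real, real_inner_comm (z n - y n) (z n - v)]
      have hd1 : dv ^ 2 ≤ ‖v - y n‖ ^ 2 := by
        rw [dist_eq_norm] at h1
        nlinarith [norm_nonneg (v - y n), hdv0.le]
      have hd2 : ‖z n - y n‖ ^ 2 ≤ dv ^ 2 := by
        rw [dist_eq_norm] at h2
        nlinarith [norm_nonneg (z n - y n)]
      have hmain : 2 * ⟪z n - v, z n - y n⟫ ≤ ‖z n - v‖ ^ 2 := by nlinarith
      rw [hzv n, real_inner_smul_left, norm_smul, Real.norm_eq_abs, abs_of_pos (ht0 n)] at hmain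
      have h3 : t n * (2 * ⟪w - v, z n - y n⟫) ≤ t n * (t n * ‖w - v‖ ^ 2) := by nlinarith
      have h4 := (mul_le_mul_iff_right₀ (ht0 n)).1 h3
      linarith
    -- compactness: nearest points converge (along a subsequence) to q
    have hyK : ∀ n, y n ∈ closedBall v (dv + 2 * ρ) ∩ X := by
      intro n
      constructor
      · rw [mem_closedBall, dist_comm]
        have h2 : dist (z n) (y n) ≤ dv := by rw [← hyd n]; exact hvmax (hzB n)
        have h5 : dist v (z n) ≤ 2 * ρ := by
          rw [dist_eq_norm, show v - z n = -(t n • (w - v)) by rw [← hzv n]; abel, norm_neg,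
            norm_smul, Real.norm_eq_abs, abs_of_pos (ht0 n)]
          have hwv : ‖w - v‖ ≤ 2 * ρ := by
            have h6 : dist w u ≤ ρ := mem_closedBall.1 hwB
            have h7 : dist u v ≤ ρ := by rw [dist_comm]; exact hvu
            calc ‖w - v‖ = dist w v := (dist_eq_norm w v).symm
              _ ≤ dist w u + dist u v := dist_triangle _ _ _
              _ ≤ 2 * ρ := by linarith
          calc t n * ‖w - v‖ ≤ 1 * (2 * ρ) := by
                have := ht1 n
                have := ht0 n
                nlinarith [norm_nonneg (w - v)]
            _ = 2 * ρ := by ring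
        calc dist v (y n) ≤ dist v (z n) + dist (z n) (y n) := dist_triangle _ _ _
          _ ≤ 2 * ρ + dv := by linarith
          _ = dv + 2 * ρ := by ring
      · exact hyX n
    have hKcomp : IsCompact (closedBall v (dv + 2 * ρ) ∩ X) :=
      (isCompact_closedBall v _).inter_right hXc
    obtain ⟨q', hq'K, φ, hφmono, hφlim⟩ := hKcomp.tendsto_subseq hyK
    -- z (φ n) → v
    have htlim : Tendsto (fun n => t (φ n)) atTop (𝓝 0) := by
      have h0 : Tendsto t atTop (𝓝 0) := by
        rw [ht]
        exact tendsto_one_div_add_atTop_nhds_zero_nat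
      exact h0.comp hφmono.tendsto_atTop
    have hzlim : Tendsto (fun n => z (φ n)) atTop (𝓝 v) := by
      have : Tendsto (fun n => v + t (φ n) • (w - v)) atTop (𝓝 (v + (0:ℝ) • (w - v))) := by
        exact tendsto_const_nhds.add (htlim.smul tendsto_const_nhds)
      simpa using this
    -- q' is a nearest point of v
    have hq'X : q' ∈ X := hq'K.2
    have hdistlim : Tendsto (fun n => dist (z (φ n)) (y (φ n))) atTop (𝓝 dv) := by
      have : Tendsto (fun n => infDist (z (φ n)) X) atTop (𝓝 (infDist v X)) :=
        ((continuous_infDist_pt X).tendsto v).comp hzlim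
      simp only [hyd] at this
      exact this
    have hq'd : dist v q' = dv := by
      have hlim2 : Tendsto (fun n => dist (z (φ n)) (y (φ n))) atTop (𝓝 (dist v q')) := by
        exact (hzlim.dist hφlim)
      exact tendsto_nhds_unique hlim2 hdistlim
    have hq'q : q' = q := by
      have huv := huniq v hdvR
      exact huv.unique ⟨hq'X, by rw [hq'd]⟩ ⟨hqX, hqd.symm⟩
    -- pass to the limit in hineq
    have hlimL : Tendsto (fun n => ⟪w - v, z (φ n) - y (φ n)⟫) atTop (𝓝 ⟪w - v, v - q⟫) := by
      have h8 : Tendsto (fun n => z (φ n) - y (φ n)) atTop (𝓝 (v - q')) := hzlim.sub hφlim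
      rw [hq'q] at h8
      exact (Continuous.inner continuous_const continuous_id).continuousAt.tendsto.comp h8
        |>.congr (fun n => rfl)
    have hlimR : Tendsto (fun n => t (φ n) * ‖w - v‖ ^ 2 / 2) atTop (𝓝 0) := by
      have : Tendsto (fun n => t (φ n) * ‖w - v‖ ^ 2 / 2) atTop (𝓝 (0 * ‖w - v‖ ^ 2 / 2)) := by
        exact (htlim.mul tendsto_const_nhds).div_const 2
      simpa using this
    exact le_of_tendsto_of_tendsto' hlimL hlimR (fun n => hineq (φ n))
  -- now exploit the variational inequality
  set g : E := v - q with hgdef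
  have hgnorm : ‖g‖ = dv := by
    rw [hgdef, ← dist_eq_norm, ← hqd]
  have hdvne : dv ≠ 0 := ne_of_gt hdv0
  have hw0B : u + (ρ/dv) • g ∈ closedBall u ρ := by
    rw [mem_closedBall, dist_eq_norm]
    have : u + (ρ/dv) • g - u = (ρ/dv) • g := add_sub_cancel_left u _
    rw [this, norm_smul, Real.norm_eq_abs, abs_of_pos (by positivity), hgnorm]
    rw [div_mul_cancel₀ ρ hdvne]
  have hkey0 := key _ hw0B
  have hsplit : (u + (ρ/dv) • g) - v = (u - v) + (ρ/dv) • g := by abel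
  rw [hsplit, inner_add_left, real_inner_smul_left, real_inner_self_eq_norm_sq, hgnorm] at hkey0
  have hinner : ρ * dv ≤ ⟪v - u, g⟫ := by
    have : ρ / dv * dv ^ 2 = ρ * dv := by field_simp
    rw [this] at hkey0
    have h9 : ⟪v - u, g⟫ = -⟪u - v, g⟫ := by
      rw [← inner_neg_left]; congr 1; abel
    linarith
  have hvunorm : ‖v - u‖ ≤ ρ := by
    rw [← dist_eq_norm]; exact hvu
  -- equality case of Cauchy-Schwarz
  have halign : dv • (v - u) = ρ • g := by
    have expand : ‖dv • (v - u) - ρ • g‖ ^ 2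
        = dv^2 * ‖v - u‖^2 - 2*(dv*ρ)*⟪v - u, g⟫ + ρ^2*dv^2 := by
      rw [norm_sub_sq_real, real_inner_smul_left, real_inner_smul_right, norm_smul, norm_smul,
        Real.norm_eq_abs, Real.norm_eq_abs, abs_of_pos hdv0, abs_of_pos hρ0, hgnorm]
      ring
    have h1 : ‖v - u‖^2 ≤ ρ^2 := by nlinarith [norm_nonneg (v - u), hvunorm, hρ0.le]
    have hA : dv^2*‖v - u‖^2 ≤ dv^2*ρ^2 := mul_le_mul_of_nonneg_left h1 (sq_nonneg dv)
    have hB : 2*(dv*ρ)*(ρ*dv) ≤ 2*(dv*ρ)*⟪v - u, g⟫ := by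
      apply mul_le_mul_of_nonneg_left hinner
      positivity
    have hn : ‖dv • (v - u) - ρ • g‖ ^ 2 ≤ 0 := by
      rw [expand]; nlinarith [hA, hB]
    have hnn := norm_nonneg (dv • (v - u) - ρ • g)
    have hzero : ‖dv • (v - u) - ρ • g‖ = 0 := by nlinarith [hn, hnn]
    rwa [norm_eq_zero, sub_eq_zero] at hzero
  have hvu' : v - u = (ρ/dv) • g := by
    have h := congrArg (fun x : E => (dv⁻¹ : ℝ) • x) halign
    simp only [smul_smul] at h
    rw [inv_mul_cancel₀ hdvne, one_smul] at h
    rw [h]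
    congr 1
    rw [mul_comm]
    exact (div_eq_mul_inv ρ dv).symm
  -- identify q with the nearest point structure at u
  have huq : u - q = ((dv - ρ)/dv) • g := by
    have h1 : u - q = g - (v - u) := by rw [hgdef]; abel
    have hco : ((dv - ρ)/dv : ℝ) = 1 - ρ/dv := by field_simp
    rw [h1, hvu', hco, sub_smul, one_smul]
  have hdvρpos : 0 < dv - ρ := by linarith
  have huqdist : dist u q = dv - ρ := by
    rw [dist_eq_norm, huq, norm_smul, Real.norm_eq_abs, abs_of_pos (by positivity), hgnorm]
    field_simp
  -- lower bound for distances from u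
  have hlow : ∀ y ∈ X, dv - ρ ≤ dist u y := by
    intro y hy
    have h1 : dv ≤ dist v y := infDist_le_dist_of_mem hy
    have h2 : dist v y ≤ dist v u + dist u y := dist_triangle _ _ _
    linarith
  have hrdvρ : r = dv - ρ := by
    have h1 : infDist u X ≤ dist u q := infDist_le_dist_of_mem hqX
    rw [huqdist, hinf] at h1
    have h2 : dv - ρ ≤ r := by
      obtain ⟨qq, hqqX, hqqd⟩ := hXc.exists_infDist_eq_dist hne u
      rw [hinf] at hqqd
      rw [hqqd]
      exact hlow qq hqqX
    linarith
  have hqp : q = p := by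
    have huu := huniq u (by rw [hinf]; linarith)
    exact huu.unique ⟨hqX, by rw [huqdist, ← hrdvρ, hinf]⟩ ⟨hp, by rw [hdist, hinf]⟩
  -- the maximizer v is exactly the claimed point
  have hup : u - p = ((dv - ρ)/dv) • g := by rw [← hqp]; exact huq
  have hcv : u + (ρ/r) • (u - p) = v := by
    rw [hup, smul_smul, hrdvρ]
    have hc : ρ / (dv - ρ) * ((dv - ρ) / dv) = ρ / dv := by
      field_simp
    rw [hc, ← hvu']
    abel
  constructor
  · rw [hcv, ← hdv, hrdvρ]; ring
  · rw [hcv, ← hqp, dist_eq_norm, ← hgdef, hgnorm, hrdvρ]; ring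

lemma propagate {X : Set E} (hXc : IsClosed X) {R : ℝ}
    (huniq : ∀ u : E, infDist u X < R →
      ∃! p : E, p ∈ X ∧ dist u p = infDist u X)
    {p u : E} {r : ℝ} (hp : p ∈ X) (hdist : dist u p = r) (hinf : infDist u X = r)
    (hr0 : 0 < r) {s : ℝ} (hrs : r ≤ s) (hsR : s < R) :
    infDist (p + (s/r) • (u - p)) X = s ∧ dist (p + (s/r) • (u - p)) p = s := by
  set c : ℝ → E := fun a => p + (a/r) • (u - p) with hc
  have hcr : c r = u := by
    rw [hc]
    simp only [div_self hr0.ne']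
    rw [one_smul]
    abel
  have hkey : ∀ k : ℕ, infDist (c (min (r + k*(r/2)) s)) X = min (r + k*(r/2)) s ∧
      dist (c (min (r + k*(r/2)) s)) p = min (r + k*(r/2)) s := by
    intro k
    induction k with
    | zero =>
      have hmin : min (r + (0:ℕ)*(r/2)) s = r := by
        simp only [Nat.cast_zero, zero_mul, add_zero]
        exact min_eq_left hrs
      rw [hmin, hcr]
      exact ⟨hinf, hdist⟩
    | succ k ih =>
      by_cases hks : s ≤ r + k*(r/2)
      · have h1 : min (r + k*(r/2)) s = s := min_eq_right hks
        have h2 : min (r + (k+1:ℕ)*(r/2)) s = s := by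
          apply min_eq_right
          push_cast
          push_cast at hks
          nlinarith
        rw [h2]
        rw [h1] at ih
        exact ih
      · push_neg at hks
        set a := min (r + k*(r/2)) s with ha
        have haval : a = r + k*(r/2) := min_eq_left hks.le
        have hra : r ≤ a := by
          rw [haval]
          have : (0:ℝ) ≤ k*(r/2) := by positivity
          linarith
        have ha0 : 0 < a := lt_of_lt_of_le hr0 hra
        have has : a < s := by rw [haval]; exact hks
        set ρ := min (r/2) (s - a) with hρ
        have hρ0' : 0 < ρ := lt_min (by positivity) (by linarith)
        have hρa : ρ < a := lt_of_le_of_lt (min_le_left _ _) (by linarith)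
        have haρs : a + ρ ≤ s := by
          have := min_le_right (r/2) (s - a)
          linarith
        have haρR : a + ρ < R := lt_of_le_of_lt haρs hsR
        obtain ⟨hstep1, hstep2⟩ := prop_step hXc huniq hp ih.2 ih.1 ha0 hρ0' hρa haρR
        have hpt : c a + (ρ/a) • (c a - p) = c (a + ρ) := by
          rw [hc]
          simp only [add_sub_cancel_left]
          rw [smul_smul]
          have hco : ρ/a*(a/r) = ρ/r := by
            field_simp
          rw [hco, add_div, add_smul]
          abel
        rw [hpt] at hstep1 hstep2
        have hmin2 : min (r + (k+1:ℕ)*(r/2)) s = a + ρ := by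
          rcases le_total (r/2) (s - a) with hle | hle
          · have hρval : ρ = r/2 := min_eq_left hle
            push_cast
            rw [show r + ((k:ℝ)+1)*(r/2) = a + ρ from by rw [haval, hρval]; ring]
            exact min_eq_left haρs
          · have hρval : ρ = s - a := min_eq_right hle
            push_cast
            rw [hρval, show a + (s - a) = s from by ring]
            apply min_eq_right
            rw [haval] at hle
            linarith
        rw [hmin2]
        exact ⟨hstep1, hstep2⟩
  obtain ⟨k, hk⟩ := exists_nat_ge ((s - r)/(r/2))
  have hmine : min (r + k*(r/2)) s = s := by
    apply min_eq_right
    rw [div_le_iff₀ (by positivity)] at hk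
    linarith
  have := hkey k
  rw [hmine] at this
  exact this

lemma combo_id (A B : E) (t : ℝ) :
    (1-t)*‖A‖^2 + t*‖B‖^2 = ‖(1-t)•A + t•B‖^2 + t*(1-t)*‖A-B‖^2 := by
  rw [norm_add_sq_real, norm_sub_sq_real, real_inner_smul_left, real_inner_smul_right,
    norm_smul, norm_smul, Real.norm_eq_abs, Real.norm_eq_abs, mul_pow, mul_pow, sq_abs, sq_abs]
  ring

lemma normal_ineq {X : Set E} (hXc : IsClosed X) {R : ℝ}
    (huniq : ∀ u : E, infDist u X < R →
      ∃! p : E, p ∈ X ∧ dist u p = infDist u X)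
    {z pz : E} (hpz : pz ∈ X) (hzd : infDist z X = dist z pz)
    (h0 : 0 < infDist z X) (hR : infDist z X < R) :
    ∀ y ∈ X, ⟪z - pz, y - pz⟫ * (2*R) ≤ infDist z X * ‖y - pz‖^2 := by
  intro y hy
  set dz := infDist z X with hdz
  have hnorm : ‖z - pz‖ = dz := by rw [← dist_eq_norm, ← hzd]
  have hstep : ∀ s : ℝ, dz ≤ s → s < R → 2*s*⟪z - pz, y - pz⟫ ≤ dz * ‖y - pz‖^2 := by
    intro s hs1 hs2
    obtain ⟨hcs, -⟩ := propagate hXc huniq hpz hzd.symm hdz.symm h0 hs1 hs2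
    have hle : s ≤ dist (pz + (s/dz) • (z - pz)) y := by
      have h := infDist_le_dist_of_mem (x := pz + (s/dz) • (z - pz)) hy
      rw [hcs] at h
      exact h
    rw [dist_eq_norm] at hle
    have hexp : pz + (s/dz) • (z - pz) - y = (s/dz) • (z - pz) - (y - pz) := by abel
    rw [hexp] at hle
    have hsq : s^2 ≤ ‖(s/dz) • (z - pz) - (y - pz)‖^2 := by
      nlinarith [norm_nonneg ((s/dz) • (z - pz) - (y - pz)), h0, hs1]
    rw [norm_sub_sq_real, real_inner_smul_left, norm_smul, Real.norm_eq_abs,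
      abs_of_pos (div_pos (lt_of_lt_of_le h0 hs1) h0), hnorm] at hsq
    have he : (s / dz * dz)^2 = s^2 := by field_simp
    rw [mul_pow, ← mul_pow, he] at hsq
    have h2 : 2 * (s/dz) * ⟪z - pz, y - pz⟫ ≤ ‖y - pz‖^2 := by linarith
    have h3 := mul_le_mul_of_nonneg_left h2 h0.le
    calc 2*s*⟪z - pz, y - pz⟫ = dz * (2 * (s/dz) * ⟪z - pz, y - pz⟫) := by
          field_simp
      _ ≤ dz * ‖y - pz‖^2 := h3
  rcases le_or_gt ⟪z - pz, y - pz⟫ 0 with hneg | hpos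
  · have h1 : ⟪z - pz, y - pz⟫ * (2*R) ≤ 0 := by nlinarith [hR, h0]
    have h2 : 0 ≤ dz * ‖y - pz‖^2 := by positivity
    linarith
  · by_contra hcon
    push_neg at hcon
    have hlt : dz * ‖y - pz‖^2 / (2 * ⟪z - pz, y - pz⟫) < R := by
      rw [div_lt_iff₀ (by positivity)]
      nlinarith
    obtain ⟨s, hs1, hs2⟩ := exists_between (max_lt hR hlt)
    have hs3 : dz ≤ s := le_of_lt (lt_of_le_of_lt (le_max_left _ _) hs1)
    have hs4 : dz * ‖y - pz‖^2 / (2 * ⟪z - pz, y - pz⟫) < s := lt_of_le_of_lt (le_max_right _ _) hs1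
    have := hstep s hs3 hs2
    rw [div_lt_iff₀ (by positivity)] at hs4
    nlinarith

lemma seg_bound {X : Set E} (hXc : IsClosed X) {R : ℝ} (hR : 0 < R)
    (huniq : ∀ u : E, infDist u X < R →
      ∃! p : E, p ∈ X ∧ dist u p = infDist u X)
    {a b : E} (ha : a ∈ X) (hb : b ∈ X) {t : ℝ} (ht0 : 0 ≤ t) (ht1 : t ≤ 1)
    (hsmall : infDist (a + t • (b - a)) X < R) :
    infDist (a + t • (b - a)) X * (2*R - infDist (a + t • (b - a)) X)
      ≤ t*(1-t)*‖b - a‖^2 := by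
  set z := a + t • (b - a) with hzdef
  set dz := infDist z X with hdz
  rcases eq_or_lt_of_le (infDist_nonneg (x := z) (s := X)) with h0 | h0
  · have hz0 : dz = 0 := by rw [hdz, ← h0]
    rw [hz0]
    have : (0:ℝ) ≤ t*(1-t)*‖b - a‖^2 := by
      have h1 : 0 ≤ 1 - t := by linarith
      positivity
    nlinarith [this]
  · obtain ⟨pz, hpzX, hpzd⟩ := hXc.exists_infDist_eq_dist ⟨a, ha⟩ z
    have hni := normal_ineq hXc huniq hpzX hpzd h0 hsmall
    have hA := hni a ha
    have hB := hni b hb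
    have hcombo : z - pz = (1-t) • (a - pz) + t • (b - pz) := by
      rw [hzdef]
      module
    have hinner : dz^2 = (1-t) * ⟪z - pz, a - pz⟫ + t * ⟪z - pz, b - pz⟫ := by
      have h1 : ⟪z - pz, z - pz⟫ = dz^2 := by
        rw [real_inner_self_eq_norm_sq, ← dist_eq_norm, ← hpzd]
      rw [← h1]
      nth_rewrite 2 [hcombo]
      rw [inner_add_right, real_inner_smul_right, real_inner_smul_right]
    have hid : (1-t) * ‖a - pz‖^2 + t * ‖b - pz‖^2 = dz^2 + t*(1-t)*‖(a-pz)-(b-pz)‖^2 := by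
      have := combo_id (a - pz) (b - pz) t
      rw [← hcombo] at this
      rw [this]
      congr 2
      rw [← dist_eq_norm, ← hpzd]
    have hab : ‖(a - pz) - (b - pz)‖ = ‖b - a‖ := by
      rw [show (a - pz) - (b - pz) = a - b by abel, norm_sub_rev]
    rw [hab] at hid
    -- multiply and combine
    have hmul : dz^2 * (2*R) ≤ dz * (dz^2 + t*(1-t)*‖b - a‖^2) := by
      have h2 : dz^2 * (2*R) = (1-t) * (⟪z - pz, a - pz⟫ * (2*R)) + t * (⟪z - pz, b - pz⟫ * (2*R)) := by
        rw [hinner]; ring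
      rw [h2, ← hid]
      have h3 : (1-t) * (⟪z - pz, a - pz⟫ * (2*R)) ≤ (1-t) * (dz * ‖a - pz‖^2) :=
        mul_le_mul_of_nonneg_left hA (by linarith)
      have h4 : t * (⟪z - pz, b - pz⟫ * (2*R)) ≤ t * (dz * ‖b - pz‖^2) :=
        mul_le_mul_of_nonneg_left hB ht0
      calc (1-t) * (⟪z - pz, a - pz⟫ * (2*R)) + t * (⟪z - pz, b - pz⟫ * (2*R))
          ≤ (1-t) * (dz * ‖a - pz‖^2) + t * (dz * ‖b - pz‖^2) := by linarith
        _ = dz * ((1-t) * ‖a - pz‖^2 + t * ‖b - pz‖^2) := by ring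
    have hdzsq : dz^2 * (2*R) = dz * (dz * (2*R)) := by ring
    rw [hdzsq] at hmul
    have h5 : dz * (2*R) ≤ dz^2 + t*(1-t)*‖b - a‖^2 := le_of_mul_le_mul_left hmul h0
    nlinarith

end Auxiliary

set_option maxHeartbeats 1600000 in
/-- **Three-point inequality.** Let `f` be `ρ`-weakly convex,
`X` closed and `R`-proximally smooth, `f` `L`-Lipschitz on an open set `U ⊇ X`,
`β > ρ + 3L/R`, `x ∈ X`, and let `x̃` minimize `y ↦ f(y) + (β/2)‖y − x‖²` over `X`.
Then for every `y ∈ X`: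
`f(y) − f(x̃) ≥ ((β − ρ − 3L/R)/2)‖y − x̃‖² + (β/2)‖x − x‖²`. -/
theorem three_point_inequality
    {d : ℕ} (f : EuclideanSpace ℝ (Fin d) → ℝ) (ρ L R β : ℝ)
    (X U : Set (EuclideanSpace ℝ (Fin d)))
    (hρ : 0 < ρ) (hL : 0 < L) (hR : 0 < R)
    (hwc : ConvexOn ℝ Set.univ fun z => f z + ρ / 2 * ‖z‖ ^ 2)
    (hXc : IsClosed X)
    (hprox : ∀ u : EuclideanSpace ℝ (Fin d), infDist u X < R →
      ∃! p : EuclideanSpace ℝ (Fin d), p ∈ X ∧ dist u p = infDist u X)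
    (hU : IsOpen U) (hXU : X ⊆ U)
    (hLip : ∀ u ∈ U, ∀ w ∈ U, |f u - f w| ≤ L * ‖u - w‖)
    (hβ : ρ + 3 * L / R < β)
    (x xtil : EuclideanSpace ℝ (Fin d)) (hx : x ∈ X) (hxtilX : xtil ∈ X)
    (hmin : ∀ y ∈ X, f xtil + β / 2 * ‖xtil - x‖ ^ 2 ≤ f y + β / 2 * ‖y - x‖ ^ 2) :
    ∀ y ∈ X,
      (β - ρ - 3 * L / R) / 2 * ‖y - xtil‖ ^ 2 + β / 2 * ‖x - xtil‖ ^ 2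
        - β / 2 * ‖y - x‖ ^ 2 ≤ f y - f xtil := by
  intro y hy
  have hLR : 0 < 3 * L / R := by positivity
  have hβ0 : 0 < β := by linarith
  set K := ‖xtil - x‖ with hKdef
  have hK0 : 0 ≤ K := norm_nonneg _
  -- the bound β·K ≤ 2L
  have hKx : β * K ≤ 2 * L := by
    have h1 := hmin x hx
    rw [sub_self, norm_zero] at h1
    have h2 := hLip x (hXU hx) xtil (hXU hxtilX)
    rw [show x - xtil = -(xtil - x) by abel, norm_neg, ← hKdef] at h2
    have h3 : f x - f xtil ≤ L * K := le_trans (le_abs_self _) h2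
    rcases eq_or_lt_of_le hK0 with h | h
    · rw [← h]; nlinarith
    · nlinarith
  -- trivial case y = xtil
  by_cases hDeq : y = xtil
  · rw [hDeq, show x - xtil = -(xtil - x) from by abel, norm_neg, ← hKdef]
    simp
  set D := ‖y - xtil‖ with hDdef
  have hD0 : 0 < D := by
    rw [hDdef, norm_pos_iff, sub_ne_zero]
    exact hDeq
  -- open neighborhood of xtil inside U
  obtain ⟨ε, hε0, hball⟩ := Metric.isOpen_iff.1 hU xtil (hXU hxtilX)
  set t₀ : ℝ := min (1/2) (min (R/(2*D)) (ε/(4*D))) with ht₀def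
  have ht₀0 : 0 < t₀ := by
    apply lt_min (by norm_num)
    exact lt_min (by positivity) (by positivity)
  -- the function giving the upper bound
  set Φ : ℝ → ℝ := fun t => f y + β/2*‖y - x‖^2 - (β-ρ)*(1-t)*D^2/2
      + (D^2/(2*R - t*D))*(L + β*K + β*(t*D) + β*(t*D)/2) with hΦdef
  -- master inequality
  have master : ∀ t, 0 < t → t ≤ t₀ → f xtil + β/2*K^2 ≤ Φ t := by
    intro t ht htt₀
    have ht12 : t ≤ 1/2 := le_trans htt₀ (min_le_left _ _)
    have ht1 : t ≤ 1 := by linarith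
    have htDR : t * D ≤ R/2 := by
      have h := le_trans htt₀ (le_trans (min_le_right _ _) (min_le_left _ _))
      rw [le_div_iff₀ (by positivity)] at h
      linarith
    have htDε : t * D ≤ ε/4 := by
      have h := le_trans htt₀ (le_trans (min_le_right _ _) (min_le_right _ _))
      rw [le_div_iff₀ (by positivity)] at h
      linarith
    set z := xtil + t • (y - xtil) with hzdef
    set dt := infDist z X with hdtdef
    have hdt0 : 0 ≤ dt := infDist_nonneg
    have hdzxtil : dist z xtil = t * D := by
      rw [dist_eq_norm, hzdef, add_sub_cancel_left, norm_smul, Real.norm_eq_abs,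
        abs_of_pos ht, hDdef]
    have hdtle : dt ≤ t * D := by
      rw [hdtdef, ← hdzxtil]
      exact infDist_le_dist_of_mem hxtilX
    have hzR : infDist z X < R := by
      rw [← hdtdef]
      calc dt ≤ t * D := hdtle
        _ ≤ R/2 := htDR
        _ < R := by linarith
    -- nearest point of z
    obtain ⟨pz, hpzX, hpzd⟩ := hXc.exists_infDist_eq_dist ⟨x, hx⟩ z
    have hdistzpz : dist z pz = dt := hpzd.symm
    -- membership in U
    have hzU : z ∈ U := by
      apply hball
      rw [mem_ball, hdzxtil]
      linarith
    have hpzU : pz ∈ U := by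
      apply hball
      rw [mem_ball]
      calc dist pz xtil ≤ dist pz z + dist z xtil := dist_triangle _ _ _
        _ = dt + t * D := by rw [dist_comm pz z, hdistzpz, hdzxtil]
        _ ≤ 2 * (t*D) := by linarith
        _ ≤ ε/2 := by linarith
        _ < ε := by linarith
    -- segment bound
    have hseg := seg_bound hXc hR hprox hxtilX hy ht.le ht1 hzR
    rw [← hzdef, ← hdtdef, ← hDdef] at hseg
    -- Lipschitz bound
    have hLf : f pz ≤ f z + L * dt := by
      have h2 := hLip pz hpzU z hzU
      have h3 : ‖pz - z‖ = dt := by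
        rw [← dist_eq_norm, dist_comm, hdistzpz]
      rw [h3] at h2
      have := le_trans (le_abs_self _) h2
      linarith
    -- convexity bound
    have hconv : f z ≤ (1-t)*(f xtil) + t*(f y) + ρ/2*(t*(1-t)*D^2) := by
      have hcc := hwc.2 (mem_univ xtil) (mem_univ y) (by linarith : (0:ℝ) ≤ 1 - t) ht.le
        (by ring)
      dsimp only at hcc
      simp only [smul_eq_mul] at hcc
      have hzc : (1-t) • xtil + t • y = z := by rw [hzdef]; module
      rw [hzc] at hcc
      have hcombo := combo_id xtil y t
      have hxy : ‖xtil - y‖ = D := by rw [hDdef, norm_sub_rev]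
      rw [hzc, hxy] at hcombo
      calc f z = (f z + ρ/2*‖z‖^2) - ρ/2*‖z‖^2 := by ring
        _ ≤ ((1-t)*(f xtil + ρ/2*‖xtil‖^2) + t*(f y + ρ/2*‖y‖^2)) - ρ/2*‖z‖^2 := by
            linarith [hcc]
        _ = (1-t)*(f xtil) + t*(f y) + ρ/2*(((1-t)*‖xtil‖^2 + t*‖y‖^2) - ‖z‖^2) := by ring
        _ = (1-t)*(f xtil) + t*(f y) + ρ/2*(t*(1-t)*D^2) := by rw [hcombo]; ring
    -- minimality at pz
    have hminz := hmin pz hpzX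
    -- expansion of ‖pz - x‖²
    have hzx : ‖z - x‖ ≤ K + t * D := by
      calc ‖z - x‖ = dist z x := (dist_eq_norm _ _).symm
        _ ≤ dist z xtil + dist xtil x := dist_triangle _ _ _
        _ = t * D + K := by rw [hdzxtil, dist_eq_norm, hKdef]
        _ = K + t * D := by ring
    have hzx0 : 0 ≤ ‖z - x‖ := norm_nonneg _
    have hpx : ‖pz - x‖^2 ≤ ‖z - x‖^2 + 2*dt*‖z - x‖ + dt^2 := by
      have h6 : ‖pz - x‖ ≤ ‖z - x‖ + dt := by
        calc ‖pz - x‖ = dist pz x := (dist_eq_norm _ _).symm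
          _ ≤ dist pz z + dist z x := dist_triangle _ _ _
          _ = dt + ‖z - x‖ := by rw [dist_comm pz z, hdistzpz, dist_eq_norm]
          _ = ‖z - x‖ + dt := by ring
      nlinarith [norm_nonneg (pz - x)]
    have hzx2 : ‖z - x‖^2 = (1-t)*K^2 + t*‖y - x‖^2 - t*(1-t)*D^2 := by
      have hcombo := combo_id (xtil - x) (y - x) t
      have h7 : (1-t) • (xtil - x) + t • (y - x) = z - x := by rw [hzdef]; module
      have h8 : (xtil - x) - (y - x) = xtil - y := by abel
      have hxy : ‖xtil - y‖ = D := by rw [hDdef, norm_sub_rev]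
      rw [h7, h8, hxy, ← hKdef] at hcombo
      linarith
    -- assemble the t-scaled inequality
    have hstep : f xtil + β/2*K^2 ≤ (1-t)*(f xtil) + t*(f y) + ρ/2*(t*(1-t)*D^2) + L*dt
        + β/2*((1-t)*K^2 + t*‖y - x‖^2 - t*(1-t)*D^2 + 2*dt*‖z - x‖ + dt^2) := by
      have e2 : ‖pz - x‖^2 ≤ (1-t)*K^2 + t*‖y - x‖^2 - t*(1-t)*D^2 + 2*dt*‖z - x‖ + dt^2 := by
        rw [← hzx2]; linarith
      have e2' : β/2*‖pz - x‖^2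
          ≤ β/2*((1-t)*K^2 + t*‖y - x‖^2 - t*(1-t)*D^2 + 2*dt*‖z - x‖ + dt^2) :=
        mul_le_mul_of_nonneg_left e2 (by positivity)
      linarith [hminz, hLf, hconv, e2']
    -- bound the dt-terms
    have hbr : dt*(L + β*‖z - x‖ + β*dt/2)
        ≤ t * ((D^2/(2*R - t*D))*(L + β*K + β*(t*D) + β*(t*D)/2)) := by
      have hden : 0 < 2*R - t*D := by linarith
      have hC0 : 0 ≤ L + β*K + β*(t*D) + β*(t*D)/2 := by
        have : 0 ≤ t * D := by positivity
        nlinarith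
      have hbrle : L + β*‖z - x‖ + β*dt/2 ≤ L + β*K + β*(t*D) + β*(t*D)/2 := by
        have h9 : β*‖z - x‖ ≤ β*(K + t*D) := by nlinarith
        nlinarith [hdtle]
      have hdt_bound : dt ≤ t*D^2/(2*R - t*D) := by
        rw [le_div_iff₀ hden]
        have h10 : dt * (2*R - t*D) ≤ dt * (2*R - dt) := by nlinarith
        have h11 : t*(1-t)*D^2 ≤ t*D^2 := by nlinarith
        linarith
      calc dt*(L + β*‖z - x‖ + β*dt/2)
          ≤ dt*(L + β*K + β*(t*D) + β*(t*D)/2) := by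
            apply mul_le_mul_of_nonneg_left hbrle hdt0
        _ ≤ (t*D^2/(2*R - t*D))*(L + β*K + β*(t*D) + β*(t*D)/2) :=
            mul_le_mul_of_nonneg_right hdt_bound hC0
        _ = t * ((D^2/(2*R - t*D))*(L + β*K + β*(t*D) + β*(t*D)/2)) := by ring
    -- divide by t
    have hmul : t * (f xtil + β/2*K^2) ≤ t * (Φ t) := by
      simp only [hΦdef]
      nlinarith [hstep, hbr]
    exact le_of_mul_le_mul_left hmul ht
  -- pass to the limit t → 0⁺
  have hΦcont : ContinuousAt Φ 0 := by
    rw [hΦdef]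
    have hden : ContinuousAt (fun t : ℝ => 2*R - t*D) 0 := by fun_prop
    have hden0 : (2*R - (0:ℝ)*D) ≠ 0 := by norm_num; nlinarith
    have h1 : ContinuousAt (fun t : ℝ => D^2/(2*R - t*D)) 0 :=
      ContinuousAt.div continuousAt_const hden hden0
    have h2 : ContinuousAt (fun t : ℝ => L + β*K + β*(t*D) + β*(t*D)/2) 0 := by fun_prop
    have h3 : ContinuousAt (fun t : ℝ => f y + β/2*‖y - x‖^2 - (β-ρ)*(1-t)*D^2/2) 0 := by fun_prop
    exact h3.add (h1.mul h2)
  have hΦ0 : Φ 0 = f y + β/2*‖y - x‖^2 - (β-ρ)*D^2/2 + (D^2/(2*R))*(L + β*K) := by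
    rw [hΦdef]
    norm_num
  have hTend : Tendsto Φ (𝓝[>] (0:ℝ)) (𝓝 (Φ 0)) :=
    (hΦcont.tendsto).mono_left nhdsWithin_le_nhds
  have hEv : ∀ᶠ t in 𝓝[>] (0:ℝ), f xtil + β/2*K^2 ≤ Φ t := by
    have hIoc : Ioc (0:ℝ) t₀ ∈ 𝓝[>] (0:ℝ) := Ioc_mem_nhdsGT_of_mem ⟨le_refl 0, ht₀0⟩
    filter_upwards [hIoc] with t ht
    exact master t ht.1 ht.2
  have hfinal : f xtil + β/2*K^2 ≤ Φ 0 := ge_of_tendsto hTend hEv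
  rw [hΦ0] at hfinal
  -- conclude
  have hbound : (D^2/(2*R))*(L + β*K) ≤ (D^2/(2*R))*(3*L) := by
    apply mul_le_mul_of_nonneg_left (by linarith) (by positivity)
  have hsplit : (β - ρ - 3*L/R)/2 * D^2 = (β-ρ)/2*D^2 - (D^2/(2*R))*(3*L) := by
    field_simp
  rw [show x - xtil = -(xtil - x) from by abel, norm_neg, ← hKdef]
  linarith [hfinal, hbound, hsplit]
end

section
/- Let h : ℝ^m → ℝ be convex and L-Lipschitz, and let c : ℝ^d → ℝ^m be continuously differentiable with β-Lipschitz derivative, i.e., ‖Dc(x) − Dc(y)‖_op ≤ β‖x − y‖ for all x, y. Then the composition f(x) := h(c(x)) is Lβ-weakly convex, i.e., x ↦ h(c(x)) + (Lβ/2)‖x‖² is convex. -/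
open Set

/-- Quadratic Taylor bound for a function with Lipschitz derivative. -/
lemma quad_taylor_bound {d m : ℕ}
    (c : EuclideanSpace ℝ (Fin d) → EuclideanSpace ℝ (Fin m)) {β : ℝ}
    (hc : ContDiff ℝ 1 c)
    (hder : ∀ x y : EuclideanSpace ℝ (Fin d),
      ‖fderiv ℝ c x - fderiv ℝ c y‖ ≤ β * ‖x - y‖)
    (x y : EuclideanSpace ℝ (Fin d)) :
    ‖c y - c x - fderiv ℝ c x (y - x)‖ ≤ β / 2 * ‖y - x‖ ^ 2 := by
  set v := y - x with hv
  set g : ℝ → EuclideanSpace ℝ (Fin m) :=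
    fun t => c (x + t • v) - t • (fderiv ℝ c x v) - c x with hg
  have hdiff := hc.differentiable one_ne_zero
  have hg' : ∀ t : ℝ, HasDerivAt g (fderiv ℝ c (x + t • v) v - fderiv ℝ c x v) t := by
    intro t
    have hline : HasDerivAt (fun t : ℝ => x + t • v) v t := by
      simpa using ((hasDerivAt_id t).smul_const v).const_add x
    have h1 : HasDerivAt (fun t : ℝ => c (x + t • v)) (fderiv ℝ c (x + t • v) v) t :=
      (hdiff (x + t • v)).hasFDerivAt.comp_hasDerivAt t hline
    have h2 : HasDerivAt (fun t : ℝ => t • (fderiv ℝ c x v)) (fderiv ℝ c x v) t := by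
      simpa using (hasDerivAt_id t).smul_const (fderiv ℝ c x v)
    simpa [hg] using (h1.sub h2).sub_const (c x)
  have hB : ∀ t : ℝ, HasDerivAt (fun t : ℝ => β * ‖v‖ ^ 2 * (t ^ 2 / 2))
      (β * ‖v‖ ^ 2 * t) t := by
    intro t
    have := ((hasDerivAt_pow 2 t).div_const 2).const_mul (β * ‖v‖ ^ 2)
    refine this.congr_deriv ?_
    ring
  have bound : ∀ t ∈ Ico (0 : ℝ) 1,
      ‖fderiv ℝ c (x + t • v) v - fderiv ℝ c x v‖ ≤ β * ‖v‖ ^ 2 * t := by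
    intro t ht
    have h1 : ‖fderiv ℝ c (x + t • v) v - fderiv ℝ c x v‖
        ≤ ‖fderiv ℝ c (x + t • v) - fderiv ℝ c x‖ * ‖v‖ := by
      simpa using (fderiv ℝ c (x + t • v) - fderiv ℝ c x).le_opNorm v
    have h2 : ‖fderiv ℝ c (x + t • v) - fderiv ℝ c x‖ ≤ β * (t * ‖v‖) := by
      have := hder (x + t • v) x
      simpa [norm_smul, abs_of_nonneg ht.1] using this
    calc ‖fderiv ℝ c (x + t • v) v - fderiv ℝ c x v‖
        ≤ ‖fderiv ℝ c (x + t • v) - fderiv ℝ c x‖ * ‖v‖ := h1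
      _ ≤ β * (t * ‖v‖) * ‖v‖ := by
          exact mul_le_mul_of_nonneg_right h2 (norm_nonneg v)
      _ = β * ‖v‖ ^ 2 * t := by ring
  have key : ‖g 1‖ ≤ β * ‖v‖ ^ 2 * ((1 : ℝ) ^ 2 / 2) := by
    refine image_norm_le_of_norm_deriv_right_le_deriv_boundary
      (f := g) (a := 0) (b := 1)
      (fun t _ => (hg' t).continuousAt.continuousWithinAt)
      (fun t _ => (hg' t).hasDerivWithinAt) ?_ hB bound (right_mem_Icc.2 zero_le_one)
    simp [hg]
  have hgy : g 1 = c y - c x - fderiv ℝ c x (y - x) := by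
    simp only [hg, hv, one_smul]
    rw [add_sub_cancel]
    abel
  rw [hgy] at key
  calc ‖c y - c x - fderiv ℝ c x (y - x)‖ ≤ β * ‖v‖ ^ 2 * ((1 : ℝ) ^ 2 / 2) := key
    _ = β / 2 * ‖y - x‖ ^ 2 := by rw [hv]; ring

/-- If `h` is convex and `L`-Lipschitz and `c` is `C¹` with
`β`-Lipschitz derivative, then `x ↦ h(c(x))` is `Lβ`-weakly convex, i.e.
`x ↦ h(c(x)) + (Lβ/2)‖x‖²` is convex. -/
theorem composite_weakly_convex
    {d m : ℕ} (h : EuclideanSpace ℝ (Fin m) → ℝ)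
    (c : EuclideanSpace ℝ (Fin d) → EuclideanSpace ℝ (Fin m))
    (L β : ℝ) (hL : 0 ≤ L) (hβ : 0 ≤ β)
    (hconv : ConvexOn ℝ Set.univ h)
    (hlip : ∀ u w : EuclideanSpace ℝ (Fin m), |h u - h w| ≤ L * ‖u - w‖)
    (hc : ContDiff ℝ 1 c)
    (hder : ∀ x y : EuclideanSpace ℝ (Fin d),
      ‖fderiv ℝ c x - fderiv ℝ c y‖ ≤ β * ‖x - y‖) :
    ConvexOn ℝ Set.univ fun x => h (c x) + L * β / 2 * ‖x‖ ^ 2 := by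
  refine ⟨convex_univ, ?_⟩
  intro x _ y _ a b ha hb hab
  set z := a • x + b • y with hz
  -- quadratic identity for the norm squared
  have hid : a * ‖x‖ ^ 2 + b * ‖y‖ ^ 2 - ‖z‖ ^ 2 = a * b * ‖x - y‖ ^ 2 := by
    have e : ∀ u : EuclideanSpace ℝ (Fin d), ‖u‖ ^ 2 = inner ℝ u u := fun u =>
      (real_inner_self_eq_norm_sq u).symm
    simp only [e, hz, inner_add_add_self, inner_sub_sub_self, real_inner_smul_left,
      real_inner_smul_right]
    linear_combination (-(a * (inner ℝ x x : ℝ)) - b * (inner ℝ y y : ℝ)) * hab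
  -- error decomposition
  have ha1 : a = 1 - b := by linarith
  have hb1 : b = 1 - a := by linarith
  have hxz : x - z = b • (x - y) := by rw [hz, ha1]; module
  have hyz : y - z = a • (y - x) := by rw [hz, hb1]; module
  have hcomb : a • c x + b • c y - c z
      = a • (c x - c z - fderiv ℝ c z (x - z)) + b • (c y - c z - fderiv ℝ c z (y - z)) := by
    have hzero : a • (x - z) + b • (y - z) = 0 := by
      rw [hxz, hyz]
      module
    have : fderiv ℝ c z (a • (x - z) + b • (y - z)) = 0 := by rw [hzero]; simp
    rw [map_add, map_smul, map_smul] at this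
    have key2 : a • (c x - c z - fderiv ℝ c z (x - z)) + b • (c y - c z - fderiv ℝ c z (y - z))
        = a • c x + b • c y - (a + b) • c z
          - (a • fderiv ℝ c z (x - z) + b • fderiv ℝ c z (y - z)) := by
      module
    rw [key2, this, hab, one_smul, sub_zero]
  have herr : ‖a • c x + b • c y - c z‖ ≤ β / 2 * (a * b) * ‖x - y‖ ^ 2 := by
    rw [hcomb]
    have b1 := quad_taylor_bound c hc hder z x
    have b2 := quad_taylor_bound c hc hder z y
    calc ‖a • (c x - c z - fderiv ℝ c z (x - z)) + b • (c y - c z - fderiv ℝ c z (y - z))‖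
        ≤ a * ‖c x - c z - fderiv ℝ c z (x - z)‖ + b * ‖c y - c z - fderiv ℝ c z (y - z)‖ := by
          refine (norm_add_le _ _).trans ?_
          rw [norm_smul, norm_smul, Real.norm_eq_abs, Real.norm_eq_abs,
            abs_of_nonneg ha, abs_of_nonneg hb]
      _ ≤ a * (β / 2 * ‖x - z‖ ^ 2) + b * (β / 2 * ‖y - z‖ ^ 2) := by
          gcongr
      _ = β / 2 * (a * ‖x - z‖ ^ 2 + b * ‖y - z‖ ^ 2) := by ring
      _ = β / 2 * (a * b) * ‖x - y‖ ^ 2 := by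
          rw [hxz, hyz, norm_smul, norm_smul, Real.norm_eq_abs, Real.norm_eq_abs,
            abs_of_nonneg ha, abs_of_nonneg hb, norm_sub_rev y x]
          linear_combination (β / 2 * a * b * ‖x - y‖ ^ 2) * hab
  -- Lipschitz step
  have hlip' : h (c z) ≤ h (a • c x + b • c y) + L * ‖a • c x + b • c y - c z‖ := by
    have := hlip (a • c x + b • c y) (c z)
    have := abs_le.1 this
    linarith [this.1]
  have hcv : h (a • c x + b • c y) ≤ a * h (c x) + b * h (c y) := by
    simpa [smul_eq_mul] using hconv.2 (Set.mem_univ (c x)) (Set.mem_univ (c y)) ha hb hab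
  have hL2 : L * ‖a • c x + b • c y - c z‖ ≤ L * (β / 2 * (a * b) * ‖x - y‖ ^ 2) :=
    mul_le_mul_of_nonneg_left herr hL
  have : h (c z) + L * β / 2 * ‖z‖ ^ 2
      ≤ a * (h (c x) + L * β / 2 * ‖x‖ ^ 2) + b * (h (c y) + L * β / 2 * ‖y‖ ^ 2) := by
    have hq : L * β / 2 * ‖z‖ ^ 2
        = a * (L * β / 2 * ‖x‖ ^ 2) + b * (L * β / 2 * ‖y‖ ^ 2)
          - L * β / 2 * (a * b * ‖x - y‖ ^ 2) := by
      linear_combination (-(L * β / 2)) * hid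
    have e2 : L * (β / 2 * (a * b) * ‖x - y‖ ^ 2) = L * β / 2 * (a * b * ‖x - y‖ ^ 2) := by
      ring
    linarith [hlip', hcv, hL2, hq, e2]
  simpa [smul_eq_mul, hz] using this
end

section
/- (Error bound for models implies quadratic set accuracy.) Let g : ℝ^d → ℝ ∪ {+∞} with sublevel set X := {y : g(y) ≤ 0}, fix x̄ ∈ X and γ > 0, and let g_x̄ : ℝ^d → ℝ ∪ {+∞} satisfy |g_x̄(y) − g(y)| ≤ (γ/2)‖y − x̄‖² for all y ∈ ℝ^d (with g_x̄(y) = +∞ exactly when g(y) = +∞). Define G_x̄(y) := g_x̄(y) + (γ/2)‖y − x̄‖² and X_x̄ := {y : G_x̄(y) ≤ 0}. Suppose there exist κ, r, ε > 0 such that dist(y, X_x̄) ≤ κ·max(G_x̄(y), 0) for all y ∈ B(x̄, ε) with G_x̄(y) ≤ r. Then dist(y, X_x̄) ≤ γκ·‖y − x̄‖² for all y ∈ X with ‖y − x̄‖ ≤ δ, where δ := min{ε, √(r/γ)}. -/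
open Metric

/-- The model `G_x̄(y) := g_x̄(y) + (γ/2)‖y − x̄‖²` built from a model `g_x̄`. -/
noncomputable def Gmodel {d : ℕ} (gx : EuclideanSpace ℝ (Fin d) → EReal) (γ : ℝ)
    (xb : EuclideanSpace ℝ (Fin d)) : EuclideanSpace ℝ (Fin d) → EReal :=
  fun y => gx y + ((γ / 2 * ‖y - xb‖ ^ 2 : ℝ) : EReal)

/-- **Error bound for models implies quadratic set accuracy.** -/
theorem error_bound_implies_set_accuracy
    {d : ℕ} (g gx : EuclideanSpace ℝ (Fin d) → EReal)
    (hgbot : ∀ y, g y ≠ ⊥) (hgxbot : ∀ y, gx y ≠ ⊥)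
    (γ κ r ε : ℝ) (hγ : 0 < γ) (hκ : 0 < κ) (hr : 0 < r) (hε : 0 < ε)
    (xb : EuclideanSpace ℝ (Fin d)) (hxb : g xb ≤ 0)
    (htop : ∀ y, (gx y = ⊤ ↔ g y = ⊤))
    (happ₁ : ∀ y, gx y ≤ g y + ((γ / 2 * ‖y - xb‖ ^ 2 : ℝ) : EReal))
    (happ₂ : ∀ y, g y ≤ gx y + ((γ / 2 * ‖y - xb‖ ^ 2 : ℝ) : EReal))
    (heb : ∀ y, ‖y - xb‖ ≤ ε → Gmodel gx γ xb y ≤ (r : EReal) →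
      infDist y {z | Gmodel gx γ xb z ≤ 0}
        ≤ κ * max (Gmodel gx γ xb y).toReal 0) :
    ∀ y, g y ≤ 0 → ‖y - xb‖ ≤ min ε (Real.sqrt (r / γ)) →
      infDist y {z | Gmodel gx γ xb z ≤ 0} ≤ γ * κ * ‖y - xb‖ ^ 2 := by
  intro y hy hnorm
  set c : ℝ := γ / 2 * ‖y - xb‖ ^ 2 with hc
  have hc0 : 0 ≤ c := by positivity
  -- G y ≤ 2c
  have hG : Gmodel gx γ xb y ≤ ((2 * c : ℝ) : EReal) := by
    have h1 : gx y ≤ ((c : ℝ) : EReal) := by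
      calc gx y ≤ g y + ((c : ℝ) : EReal) := happ₁ y
        _ ≤ 0 + ((c : ℝ) : EReal) := by
            exact add_le_add_left hy _
        _ = ((c : ℝ) : EReal) := by simp
    calc Gmodel gx γ xb y = gx y + ((c : ℝ) : EReal) := rfl
      _ ≤ ((c : ℝ) : EReal) + ((c : ℝ) : EReal) := add_le_add_left h1 _
      _ = ((2 * c : ℝ) : EReal) := by
          rw [← EReal.coe_add]; norm_num [two_mul]
  have hnε : ‖y - xb‖ ≤ ε := le_trans hnorm (min_le_left _ _)
  have hnr : ‖y - xb‖ ^ 2 ≤ r / γ := by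
    have h := le_trans hnorm (min_le_right _ _)
    have := Real.sq_sqrt (le_of_lt (div_pos hr hγ))
    nlinarith [norm_nonneg (y - xb), Real.sqrt_nonneg (r / γ)]
  have h2c : 2 * c ≤ r := by
    rw [hc]
    have : γ * ‖y - xb‖ ^ 2 ≤ r := by
      rw [← le_div_iff₀' hγ]; exact hnr
    linarith
  have hGr : Gmodel gx γ xb y ≤ (r : EReal) :=
    le_trans hG (by exact_mod_cast h2c)
  have key := heb y hnε hGr
  -- bound toReal
  have hGbot : Gmodel gx γ xb y ≠ ⊥ := by
    intro h
    rw [show Gmodel gx γ xb y = gx y + ((c : ℝ) : EReal) from rfl,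
      EReal.add_eq_bot_iff] at h
    rcases h with h | h
    · exact hgxbot y h
    · exact EReal.coe_ne_bot _ h
  have hGtop : Gmodel gx γ xb y ≠ ⊤ :=
    ne_top_of_le_ne_top (EReal.coe_ne_top r) hGr
  have htR : (Gmodel gx γ xb y).toReal ≤ 2 * c := by
    have := EReal.toReal_le_toReal hG hGbot (EReal.coe_ne_top _)
    simpa only [EReal.toReal_coe] using this
  have hmax : max (Gmodel gx γ xb y).toReal 0 ≤ 2 * c :=
    max_le htR (by linarith)
  calc infDist y {z | Gmodel gx γ xb z ≤ 0}
      ≤ κ * max (Gmodel gx γ xb y).toReal 0 := key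
    _ ≤ κ * (2 * c) := by
        exact mul_le_mul_of_nonneg_left hmax (le_of_lt hκ)
    _ = γ * κ * ‖y - xb‖ ^ 2 := by rw [hc]; ring
end

section
/- (Slope-based one-point error bound; Ioffe's basic lemma.) Let h : ℝ^d → ℝ ∪ {+∞} be lower semicontinuous, fix x̄ with h(x̄) < +∞, and suppose there are constants α ∈ ℝ and κ, ε > 0 satisfying 0 ≤ h(x̄) − α < ε/κ and such that the slope satisfies |∇h|(x) ≥ 1/κ for all x ∈ B(x̄, ε) with α < h(x) ≤ h(x̄). Then the sublevel set {h ≤ α} is nonempty and dist(x̄, {h ≤ α}) ≤ κ(h(x̄) − α). -/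
open Metric
open scoped Topology

open Filter in
theorem ekeland' {X : Type*} [MetricSpace X] [CompleteSpace X]
    (f : X → ℝ) (hf : LowerSemicontinuous f) (C : ℝ) (hC : ∀ x, C ≤ f x)
    (σ : ℝ) (hσ : 0 < σ) (x₀ : X) :
    ∃ z, f z + σ * dist z x₀ ≤ f x₀ ∧ ∀ y, y ≠ z → f z < f y + σ * dist z y := by
  set S : X → Set X := fun x => {y | f y + σ * dist y x ≤ f x} with hS
  have hmemS : ∀ x, x ∈ S x := fun x => by simp [hS]
  have hbdd : ∀ x, BddBelow (f '' S x) := fun x => ⟨C, by rintro _ ⟨y, -, rfl⟩; exact hC y⟩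
  have htrans : ∀ x y w, y ∈ S x → w ∈ S y → w ∈ S x := by
    intro x y w hy hw
    simp only [hS, Set.mem_setOf_eq] at *
    have := dist_triangle w y x
    nlinarith [hw, hy]
  have key : ∀ n : ℕ, ∀ x : X, ∃ y, y ∈ S x ∧ f y ≤ sInf (f '' S x) + (1/2)^n := by
    intro n x
    have h1 : sInf (f '' S x) < sInf (f '' S x) + (1/2)^n :=
      lt_add_of_pos_right _ (by positivity)
    obtain ⟨a, ⟨y, hy, rfl⟩, ha⟩ := exists_lt_of_csInf_lt ((Set.nonempty_of_mem (hmemS x)).image f) h1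
    exact ⟨y, hy, ha.le⟩
  choose next hnext₁ hnext₂ using key
  let u : ℕ → X := fun n => Nat.rec x₀ (fun n x => next n x) n
  have hu0 : u 0 = x₀ := rfl
  have husucc : ∀ n, u (n+1) = next n (u n) := fun n => rfl
  have humem : ∀ n, u (n+1) ∈ S (u n) := fun n => hnext₁ n (u n)
  have huchain : ∀ n m, n ≤ m → u m ∈ S (u n) := by
    intro n m hnm
    induction m, hnm using Nat.le_induction with
    | base => exact hmemS _
    | succ m hnm ih => exact htrans _ _ _ ih (humem m)
  have hdist : ∀ n m, n ≤ m → σ * dist (u m) (u n) ≤ f (u n) - f (u m) := by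
    intro n m hnm
    have := huchain n m hnm
    simp only [hS, Set.mem_setOf_eq] at this; linarith
  have hanti : Antitone (fun n => f (u n)) := by
    refine antitone_nat_of_succ_le fun n => ?_
    have := hdist n (n+1) (Nat.le_succ n)
    nlinarith [dist_nonneg (x := u (n+1)) (y := u n)]
  have hbdd' : BddBelow (Set.range fun n => f (u n)) := ⟨C, by rintro _ ⟨n, rfl⟩; exact hC _⟩
  set L := ⨅ n, f (u n) with hL
  have hLlim : Tendsto (fun n => f (u n)) atTop (𝓝 L) := tendsto_atTop_ciInf hanti hbdd'
  have hLle : ∀ n, L ≤ f (u n) := fun n => ciInf_le hbdd' n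
  have hcauchy : CauchySeq u := by
    refine cauchySeq_of_le_tendsto_0 (fun n => (f (u n) - L) / σ) (fun n m N hn hm => ?_) ?_
    · rcases le_total n m with hnm | hnm
      · have := hdist n m hnm
        have h2 := hanti hn
        rw [dist_comm]
        show dist (u m) (u n) ≤ (f (u N) - L) / σ
        rw [le_div_iff₀ hσ]
        calc dist (u m) (u n) * σ = σ * dist (u m) (u n) := by ring
          _ ≤ f (u n) - f (u m) := this
          _ ≤ f (u N) - L := by have h5 := hLle m; have h6 := hanti hn; simp only at h6; linarith
      · have := hdist m n hnm
        show dist (u n) (u m) ≤ (f (u N) - L) / σ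
        rw [le_div_iff₀ hσ]
        calc dist (u n) (u m) * σ = σ * dist (u n) (u m) := by ring
          _ ≤ f (u m) - f (u n) := this
          _ ≤ f (u N) - L := by have h5 := hLle n; have h6 := hanti hm; simp only at h6; linarith
    · have : Tendsto (fun n => (f (u n) - L) / σ) atTop (𝓝 ((L - L) / σ)) :=
        ((hLlim.sub tendsto_const_nhds).div_const σ)
      simpa using this
  obtain ⟨z, hz⟩ := cauchySeq_tendsto_of_complete hcauchy
  have hSclosed : ∀ x, IsClosed (S x) := by
    intro x
    have : LowerSemicontinuous (fun y => f y + σ * dist y x) :=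
      hf.add ((continuous_const.mul (continuous_id.dist continuous_const)).lowerSemicontinuous)
    exact this.isClosed_preimage (f x)
  have hzmem : ∀ n, z ∈ S (u n) := by
    intro n
    refine (hSclosed (u n)).mem_of_tendsto (hz.comp (tendsto_add_atTop_nat n)) ?_
    exact Eventually.of_forall fun m => huchain n (m + n) (Nat.le_add_left n m)
  refine ⟨z, by simpa [hS, hu0] using hzmem 0, ?_⟩
  intro y hy
  by_contra hcon
  push_neg at hcon
  have hymem : ∀ n, y ∈ S (u n) := by
    intro n
    have h1 := hzmem n
    simp only [hS, Set.mem_setOf_eq] at h1 ⊢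
    have := dist_triangle y z (u n)
    rw [dist_comm z y] at hcon
    nlinarith
  have hfzy : f z ≤ f y := by
    have h1 : ∀ n : ℕ, f z ≤ f y + (1/2)^n := by
      intro n
      have h2 : f (u (n+1)) ≤ sInf (f '' S (u n)) + (1/2)^n := hnext₂ n (u n)
      have h3 : sInf (f '' S (u n)) ≤ f y := csInf_le (hbdd _) ⟨y, hymem n, rfl⟩
      have h4 := hzmem (n+1)
      simp only [hS, Set.mem_setOf_eq] at h4
      nlinarith [dist_nonneg (x := z) (y := u (n+1))]
    have hlim2 : Tendsto (fun n : ℕ => f y + (1/2)^n) atTop (𝓝 (f y)) := by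
      have : Tendsto (fun n : ℕ => f y + (1/2)^n) atTop (𝓝 (f y + 0)) :=
        tendsto_const_nhds.add (tendsto_pow_atTop_nhds_zero_of_lt_one (by norm_num) (by norm_num))
      simpa using this
    exact ge_of_tendsto' hlim2 h1
  have hd : 0 < dist z y := dist_pos.2 (Ne.symm hy)
  nlinarith


/-- The slope `|∇h|(x) = limsup_{y→x, y≠x} max(h(x) − h(y), 0)/‖x − y‖` of an
extended-real-valued function. -/
noncomputable def erealSlope {d : ℕ} (h : EuclideanSpace ℝ (Fin d) → EReal)
    (x : EuclideanSpace ℝ (Fin d)) : EReal :=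
  Filter.limsup (fun y => max (h x - h y) 0 * (((‖x - y‖⁻¹ : ℝ)) : EReal)) (𝓝[≠] x)

open Filter in
theorem ioffe_aux
    {d : ℕ} (h : EuclideanSpace ℝ (Fin d) → EReal)
    (hlsc : LowerSemicontinuous h) (hbot : ∀ y, h y ≠ ⊥)
    (xb : EuclideanSpace ℝ (Fin d)) (hfin : h xb ≠ ⊤)
    (α κ ε : ℝ) (hκ : 0 < κ) (hε : 0 < ε)
    (hα₁ : (α : EReal) ≤ h xb)
    (hslope : ∀ y, ‖y - xb‖ ≤ ε → (α : EReal) < h y → h y ≤ h xb →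
      ((1 / κ : ℝ) : EReal) ≤ erealSlope h y)
    (κ' : ℝ) (hκκ' : κ < κ') (hκ'ε : κ' * ((h xb).toReal - α) < ε) :
    ∃ z, h z ≤ (α : EReal) ∧ dist xb z ≤ κ' * ((h xb).toReal - α) := by
  set t := (h xb).toReal - α with ht
  have hκ'pos : 0 < κ' := hκ.trans hκκ'
  have hm_ne_top : ∀ y, h y ⊓ h xb ≠ ⊤ := fun y => by
    exact fun hc => hfin (top_le_iff.mp (hc ▸ min_le_right (h y) (h xb)))
  have hm_ne_bot : ∀ y, h y ⊓ h xb ≠ ⊥ := fun y =>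
    (lt_min (Ne.bot_lt (hbot y)) (Ne.bot_lt (hbot xb))).ne'
  set f : EuclideanSpace ℝ (Fin d) → ℝ := fun y => max ((h y ⊓ h xb).toReal) α with hfdef
  have hfα : ∀ y, α ≤ f y := fun y => le_max_right _ _
  have hαxb : α ≤ (h xb).toReal := by
    have := EReal.toReal_le_toReal hα₁ (EReal.coe_ne_bot α) hfin
    simpa using this
  have hfxb : f xb = (h xb).toReal := by
    simp only [hfdef, min_self]
    exact max_eq_left hαxb
  -- lower semicontinuity of f
  have hflsc : LowerSemicontinuous f := by
    intro x c hc
    rcases lt_or_ge c α with hcα | hcα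
    · exact Eventually.of_forall fun y => hcα.trans_le (hfα y)
    · have hc' : c < max ((h x ⊓ h xb).toReal) α := hc
      have hcm : c < (h x ⊓ h xb).toReal := by
        rcases le_or_gt ((h x ⊓ h xb).toReal) α with hle | hlt
        · rw [max_eq_right hle] at hc'; linarith
        · rwa [max_eq_left hlt.le] at hc'
      have hcm' : (c : EReal) < h x ⊓ h xb := by
        rw [← EReal.coe_toReal (hm_ne_top x) (hm_ne_bot x)]
        exact_mod_cast hcm
      have hcx : (c : EReal) < h x := hcm'.trans_le (min_le_left _ _)
      have hcxb : (c : EReal) < h xb := hcm'.trans_le (min_le_right _ _)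
      filter_upwards [hlsc x (c : EReal) hcx] with y hy
      have hym : (c : EReal) < h y ⊓ h xb := lt_min hy hcxb
      have : c < (h y ⊓ h xb).toReal := by
        by_contra hcon
        push_neg at hcon
        have : h y ⊓ h xb ≤ (c : EReal) := by
          rw [← EReal.coe_toReal (hm_ne_top y) (hm_ne_bot y)]
          exact_mod_cast hcon
        exact absurd (hym.trans_le this) (lt_irrefl _)
      exact lt_max_iff.mpr (Or.inl this)
  obtain ⟨z, hz1, hz2⟩ := ekeland' f hflsc α hfα (1/κ') (by positivity) xb
  have hdzx : dist z xb ≤ κ' * t := by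
    have h1 : (1/κ') * dist z xb ≤ f xb - f z := by linarith
    have h2 : f xb - f z ≤ t := by
      have := hfα z; rw [hfxb]; simp only [ht]; linarith
    have h3 : (1/κ') * dist z xb ≤ t := h1.trans h2
    have h4 := mul_le_mul_of_nonneg_left h3 hκ'pos.le
    calc dist z xb = κ' * ((1/κ') * dist z xb) := by field_simp
      _ ≤ κ' * t := h4
  have ht0 : 0 ≤ t := by simp only [ht]; linarith
  have hzα : h z ≤ (α : EReal) := by
    by_contra hcon
    push_neg at hcon
    -- h z ≤ h xb
    have hzxb : h z ≤ h xb := by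
      by_contra hcon2
      push_neg at hcon2
      have hmz : h z ⊓ h xb = h xb := min_eq_right hcon2.le
      have hfz : f z = f xb := by simp only [hfdef, hmz, min_self]
      have : dist z xb = 0 := by
        have h3 : (1/κ') * dist z xb ≤ 0 := by rw [hfz] at hz1; linarith
        have h4 : 0 ≤ dist z xb := dist_nonneg
        nlinarith [one_div_pos.mpr hκ'pos]
      have : z = xb := by rwa [dist_eq_zero] at this
      rw [this] at hcon2; exact absurd hcon2 (lt_irrefl _)
    have hz_ne_top : h z ≠ ⊤ := fun hc => hfin (top_le_iff.mp (hc ▸ hzxb))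
    have hmz : h z ⊓ h xb = h z := min_eq_left hzxb
    have hαz : α < (h z).toReal := by
      have := EReal.toReal_le_toReal hcon.le (EReal.coe_ne_bot α) hz_ne_top
      simp only [EReal.toReal_coe] at this
      rcases lt_or_eq_of_le this with h5 | h5
      · exact h5
      · exfalso
        have : h z = (α : EReal) := by
          rw [← EReal.coe_toReal hz_ne_top (hbot z), ← h5]
        rw [this] at hcon; exact absurd hcon (lt_irrefl _)
    have hfz : f z = (h z).toReal := by
      simp only [hfdef, hmz]; exact max_eq_left hαz.le
    -- the slope bound from hypothesis
    have hnorm : ‖z - xb‖ ≤ ε := by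
      rw [← dist_eq_norm]
      exact hdzx.trans hκ'ε.le
    have hs := hslope z hnorm hcon hzxb
    -- show slope ≤ 1/κ'
    have hsle : erealSlope h z ≤ ((1/κ' : ℝ) : EReal) := by
      refine Filter.limsup_le_of_le (by isBoundedDefault) ?_
      set r : ℝ := (f z - α) * κ' / 2 with hr
      have hrpos : 0 < r := by rw [hr, hfz]; nlinarith [hαz, hκ'pos]
      have hball : ∀ᶠ y in 𝓝[≠] z, y ∈ ball z r :=
        eventually_nhdsWithin_of_eventually_nhds
          (eventually_of_mem (ball_mem_nhds z hrpos) fun y hy => hy)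
      filter_upwards [hball, self_mem_nhdsWithin] with y hyball hyne
      have hyne' : y ≠ z := hyne
      have hdy : dist z y < r := by rw [dist_comm]; exact mem_ball.mp hyball
      have hfy : α < f y := by
        have h6 := hz2 y hyne'
        have h7 : (1/κ') * dist z y < (1/κ') * r := by
          apply mul_lt_mul_of_pos_left hdy (by positivity)
        have h8 : (1/κ') * r = (f z - α)/2 := by rw [hr]; field_simp
        nlinarith
      have hαym : (α : EReal) < h y ⊓ h xb := by
        have hfy' : α < max ((h y ⊓ h xb).toReal) α := hfy
        have h9 : α < (h y ⊓ h xb).toReal := by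
          rcases le_or_gt ((h y ⊓ h xb).toReal) α with hle | hlt
          · rw [max_eq_right hle] at hfy'; linarith
          · rwa [max_eq_left hlt.le] at hfy'
        rw [← EReal.coe_toReal (hm_ne_top y) (hm_ne_bot y)]
        exact_mod_cast h9
      have hαy : (α : EReal) < h y := hαym.trans_le (min_le_left _ _)
      rcases eq_or_ne (h y) ⊤ with hytop | hytop
      · rw [hytop, EReal.sub_top, max_eq_right bot_le, zero_mul]
        exact_mod_cast (by positivity : (0:ℝ) ≤ 1/κ')
      · -- h y finite
        have hfyle : f y ≤ (h y).toReal := by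
          show max ((h y ⊓ h xb).toReal) α ≤ (h y).toReal
          apply max_le
          · exact EReal.toReal_le_toReal (min_le_left _ _) (hm_ne_bot y) hytop
          · have := EReal.toReal_le_toReal hαy.le (EReal.coe_ne_bot α) hytop
            simpa using this
        have hsub : h z - h y = (((h z).toReal - (h y).toReal : ℝ) : EReal) := by
          rw [EReal.coe_sub, EReal.coe_toReal hz_ne_top (hbot z),
            EReal.coe_toReal hytop (hbot y)]
        have hquot : max ((h z).toReal - (h y).toReal) 0 * ‖z - y‖⁻¹ ≤ 1/κ' := by
          have h6 := hz2 y hyne'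
          have hny : 0 < ‖z - y‖ := by
            rw [norm_sub_pos_iff]; exact fun hc => hyne' (hc.symm)
          have hdist : dist z y = ‖z - y‖ := dist_eq_norm z y
          have h7 : (h z).toReal - (h y).toReal ≤ (1/κ') * ‖z - y‖ := by
            rw [← hdist]; rw [hfz] at h6; nlinarith
          have h8 : max ((h z).toReal - (h y).toReal) 0 ≤ (1/κ') * ‖z - y‖ :=
            max_le h7 (by positivity)
          calc max ((h z).toReal - (h y).toReal) 0 * ‖z - y‖⁻¹
              ≤ ((1/κ') * ‖z - y‖) * ‖z - y‖⁻¹ :=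
                mul_le_mul_of_nonneg_right h8 (by positivity)
            _ = 1/κ' := by field_simp
        calc max (h z - h y) 0 * ((‖z - y‖⁻¹ : ℝ) : EReal)
            = ((max ((h z).toReal - (h y).toReal) 0 * ‖z - y‖⁻¹ : ℝ) : EReal) := by
              have hmax : max ((((h z).toReal - (h y).toReal : ℝ)) : EReal) 0
                  = ((max ((h z).toReal - (h y).toReal) 0 : ℝ) : EReal) := by
                rcases le_total ((h z).toReal - (h y).toReal) 0 with hle | hle
                · rw [max_eq_right (show ((((h z).toReal - (h y).toReal : ℝ)) : EReal) ≤ 0 by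
                      exact_mod_cast hle), max_eq_right hle, EReal.coe_zero]
                · rw [max_eq_left (show (0 : EReal) ≤ (((h z).toReal - (h y).toReal : ℝ)) by
                      exact_mod_cast hle), max_eq_left hle]
              rw [hsub, hmax, ← EReal.coe_mul]
          _ ≤ ((1/κ' : ℝ) : EReal) := EReal.coe_le_coe_iff.mpr hquot
    have : ((1/κ : ℝ) : EReal) ≤ ((1/κ' : ℝ) : EReal) := hs.trans hsle
    rw [EReal.coe_le_coe_iff] at this
    have : 1/κ' < 1/κ := one_div_lt_one_div_of_lt hκ hκκ'
    linarith
  exact ⟨z, hzα, by rwa [dist_comm]⟩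


/-- **Slope-based one-point error bound; Ioffe's basic lemma.** -/

theorem ioffe_basic_lemma
    {d : ℕ} (h : EuclideanSpace ℝ (Fin d) → EReal)
    (hlsc : LowerSemicontinuous h) (hbot : ∀ y, h y ≠ ⊥)
    (xb : EuclideanSpace ℝ (Fin d)) (hfin : h xb ≠ ⊤)
    (α κ ε : ℝ) (hκ : 0 < κ) (hε : 0 < ε)
    (hα₁ : (α : EReal) ≤ h xb) (hα₂ : (h xb).toReal - α < ε / κ)
    (hslope : ∀ y, ‖y - xb‖ ≤ ε → (α : EReal) < h y → h y ≤ h xb →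
      ((1 / κ : ℝ) : EReal) ≤ erealSlope h y) :
    {y | h y ≤ (α : EReal)}.Nonempty ∧
      infDist xb {y | h y ≤ (α : EReal)} ≤ κ * ((h xb).toReal - α) := by
  have hαxb : α ≤ (h xb).toReal := by
    have := EReal.toReal_le_toReal hα₁ (EReal.coe_ne_bot α) hfin
    simpa using this
  set t := (h xb).toReal - α with ht
  have ht0 : 0 ≤ t := by simp only [ht]; linarith
  rcases eq_or_lt_of_le ht0 with heq | hpos
  · -- t = 0 : xb itself is in the sublevel set
    have htr : (h xb).toReal = α := by simp only [ht] at heq; linarith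
    have hxb : h xb = (α : EReal) := by
      rw [← EReal.coe_toReal hfin (hbot xb), htr]
    have hmem : xb ∈ {y | h y ≤ (α : EReal)} := le_of_eq hxb
    refine ⟨⟨xb, hmem⟩, ?_⟩
    rw [infDist_zero_of_mem hmem, ← heq, mul_zero]
  · -- t > 0
    have hκε : κ * t < ε := by
      have := (lt_div_iff₀' hκ).mp hα₂
      simpa [ht] using this
    have hκεt : κ < ε / t := (lt_div_iff₀ hpos).mpr hκε
    have hmid1 : κ < (κ + ε/t)/2 := by linarith
    have hmid2 : (κ + ε/t)/2 * t < ε := by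
      have h4 : (ε/t) * t = ε := div_mul_cancel₀ ε hpos.ne'
      nlinarith
    obtain ⟨z0, hz0, _⟩ := ioffe_aux h hlsc hbot xb hfin α κ ε hκ hε hα₁ hslope
      ((κ + ε/t)/2) hmid1 hmid2
    refine ⟨⟨z0, hz0⟩, ?_⟩
    by_contra hlt
    push_neg at hlt
    set D := infDist xb {y | h y ≤ (α : EReal)} with hD
    have hltD : κ * t < D := by simpa [ht] using hlt
    have hκD : κ < D / t := (lt_div_iff₀ hpos).mpr hltD
    set κ'' := min ((κ + D/t)/2) ((κ + ε/t)/2) with hκ''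
    have h1 : κ < κ'' := lt_min (by linarith) hmid1
    have h2 : κ'' * t < ε := by
      have h3 : κ'' ≤ (κ + ε/t)/2 := min_le_right _ _
      nlinarith
    obtain ⟨z, hz, hd⟩ := ioffe_aux h hlsc hbot xb hfin α κ ε hκ hε hα₁ hslope κ'' h1 h2
    have h5 : D ≤ dist xb z := infDist_le_dist_of_mem hz
    have h6 : κ'' * t < D := by
      have h7 : κ'' ≤ (κ + D/t)/2 := min_le_left _ _
      have h8 : (D/t) * t = D := div_mul_cancel₀ D hpos.ne'
      nlinarith
    have h9 : dist xb z ≤ κ'' * t := by simpa [ht] using hd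
    linarith
end

section
/- (Slope-based local error bound on a ball.) Let h : ℝ^d → ℝ ∪ {+∞} be lower semicontinuous, fix x̄ with h(x̄) < +∞, and suppose there are constants α, β ∈ ℝ and κ, ε > 0 satisfying 0 < β − α < ε/(2κ) and such that the slope satisfies |∇h|(x) ≥ 1/κ for all x ∈ B(x̄, ε) with α < h(x) ≤ β. Then for every x ∈ B(x̄, ε/2) with h(x) ≤ β one has dist(x, {h ≤ α}) ≤ κ·max(h(x) − α, 0). -/
open Metric Filter
open scoped Topology

theorem my_ekeland {E : Type*} [NormedAddCommGroup E] [CompleteSpace E]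
    (f : E → ℝ) (hf : LowerSemicontinuous f) (hf0 : ∀ x, 0 ≤ f x)
    (c : ℝ) (hc : 0 < c) (y : E) :
    ∃ v : E, (f v + c * ‖v - y‖ ≤ f y) ∧ ∀ x, f v ≤ f x + c * ‖x - v‖ := by
  classical
  set F : E → Set E := fun w => {z | f z + c * ‖z - w‖ ≤ f w} with hF
  have self : ∀ w, w ∈ F w := by
    intro w; simp [hF]
  have htrans : ∀ w z, z ∈ F w → F z ⊆ F w := by
    intro w z hz x hx
    simp only [hF, Set.mem_setOf_eq] at *
    have htri : ‖x - w‖ ≤ ‖x - z‖ + ‖z - w‖ := by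
      have := norm_add_le (x - z) (z - w)
      simpa using this
    nlinarith [norm_nonneg (x - z), norm_nonneg (z - w)]
  have hne : ∀ w, (f '' F w).Nonempty := fun w => ⟨f w, ⟨w, self w, rfl⟩⟩
  have hbdd : ∀ w, BddBelow (f '' F w) := by
    intro w; exact ⟨0, by rintro _ ⟨z, _, rfl⟩; exact hf0 z⟩
  set m : E → ℝ := fun w => sInf (f '' F w) with hm
  have m_le : ∀ w z, z ∈ F w → m w ≤ f z := by
    intro w z hz; exact csInf_le (hbdd w) ⟨z, hz, rfl⟩
  have m_self : ∀ w, m w ≤ f w := fun w => m_le w w (self w)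
  have hT : ∀ w : E, ∃ z, z ∈ F w ∧ f z ≤ (m w + f w) / 2 := by
    intro w
    rcases le_or_gt (f w) ((m w + f w) / 2) with hle | hlt
    · exact ⟨w, self w, hle⟩
    · have : sInf (f '' F w) < (m w + f w) / 2 := by
        have := m_self w; simp only [hm] at *; linarith
      obtain ⟨a, ⟨z, hzF, rfl⟩, ha⟩ := exists_lt_of_csInf_lt (hne w) this
      exact ⟨z, hzF, le_of_lt ha⟩
  choose T hTF hTle using hT
  have m_mono : ∀ w, m w ≤ m (T w) := by
    intro w
    exact le_csInf (hne (T w)) (by rintro _ ⟨z, hz, rfl⟩; exact m_le w z (htrans w (T w) (hTF w) hz))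
  have gap : ∀ w, f (T w) - m (T w) ≤ (f w - m w) / 2 := by
    intro w
    have h1 := hTle w
    have h2 := m_mono w
    linarith
  set x : ℕ → E := fun n => T^[n] y with hx
  have hx0 : x 0 = y := rfl
  have hxs : ∀ n, x (n + 1) = T (x n) := by
    intro n; simp [hx, Function.iterate_succ_apply']
  have gapn : ∀ n, f (x n) - m (x n) ≤ (f y - m y) / 2 ^ n := by
    intro n
    induction n with
    | zero => simp [hx0]
    | succ n ih =>
      rw [hxs n]
      calc f (T (x n)) - m (T (x n)) ≤ (f (x n) - m (x n)) / 2 := gap (x n)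
        _ ≤ ((f y - m y) / 2 ^ n) / 2 := by linarith
        _ = (f y - m y) / 2 ^ (n + 1) := by ring
  have chain : ∀ n k, F (x (n + k)) ⊆ F (x n) := by
    intro n k
    induction k with
    | zero => exact fun z hz => hz
    | succ k ih =>
      intro z hz
      refine ih ?_
      have : x (n + (k+1)) = T (x (n+k)) := hxs (n+k)
      rw [this] at hz
      exact htrans _ _ (hTF (x (n+k))) hz
  have chain' : ∀ n k, n ≤ k → F (x k) ⊆ F (x n) := by
    intro n k hnk
    obtain ⟨j, rfl⟩ := Nat.exists_eq_add_of_le hnk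
    exact chain n j
  have memF : ∀ n k, n ≤ k → x k ∈ F (x n) := fun n k hnk => chain' n k hnk (self (x k))
  have keybound : ∀ n, ∀ z ∈ F (x n), c * ‖z - x n‖ ≤ (f y - m y) / 2 ^ n := by
    intro n z hz
    have h1 : f z + c * ‖z - x n‖ ≤ f (x n) := hz
    have h2 : m (x n) ≤ f z := m_le (x n) z hz
    have := gapn n
    linarith
  -- Cauchy
  set C : ℝ := 2 * (f y - m y) / c with hC
  have hdistb : ∀ N i j, N ≤ i → N ≤ j → dist (x i) (x j) ≤ C * (1/2) ^ N := by
    intro N i j hi hj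
    have b1 := keybound N (x i) (memF N i hi)
    have b2 := keybound N (x j) (memF N j hj)
    have htri : dist (x i) (x j) ≤ ‖x i - x N‖ + ‖x j - x N‖ := by
      rw [dist_eq_norm]
      have := norm_add_le (x i - x N) (x N - x j)
      have h' : ‖x N - x j‖ = ‖x j - x N‖ := norm_sub_rev _ _
      simp only [sub_add_sub_cancel] at this
      linarith
    have hpow : (0:ℝ) < 2 ^ N := by positivity
    have hCeq : C * (1/2)^N = 2 * (f y - m y) / (c * 2 ^ N) := by
      rw [hC]; field_simp; rw [mul_assoc, ← mul_pow]; norm_num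
    rw [hCeq, le_div_iff₀ (by positivity : (0:ℝ) < c * 2 ^ N)]
    rw [le_div_iff₀ hpow] at b1 b2
    have hmul := mul_le_mul_of_nonneg_right htri (show (0:ℝ) ≤ c * 2 ^ N by positivity)
    nlinarith [hmul, b1, b2]
  have hb0 : Tendsto (fun n : ℕ => C * (1/2:ℝ)^n) atTop (nhds 0) := by
    have := tendsto_pow_atTop_nhds_zero_of_lt_one (by norm_num : (0:ℝ) ≤ 1/2) (by norm_num : (1/2:ℝ) < 1)
    simpa using this.const_mul C
  have hcauchy : CauchySeq x :=
    cauchySeq_of_le_tendsto_0 _ (fun i j N hi hj => hdistb N i j hi hj) hb0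
  obtain ⟨v, hv⟩ := cauchySeq_tendsto_of_complete hcauchy
  have hFclosed : ∀ w, IsClosed (F w) := by
    intro w
    have : F w = (fun z => f z + c * ‖z - w‖) ⁻¹' Set.Iic (f w) := rfl
    rw [this]
    refine LowerSemicontinuous.isClosed_preimage ?_ _
    exact hf.add (Continuous.lowerSemicontinuous (continuous_const.mul ((continuous_id.sub continuous_const).norm)))
  have hvF : ∀ n, v ∈ F (x n) := by
    intro n
    refine (hFclosed (x n)).mem_of_tendsto hv ?_
    filter_upwards [eventually_ge_atTop n] with k hk
    exact memF n k hk
  refine ⟨v, ?_, ?_⟩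
  · have := hvF 0; rw [hx0] at this; exact this
  · intro z
    by_contra hcon
    push_neg at hcon
    have hzFv : z ∈ F v := le_of_lt hcon
    have hzn : ∀ n, z ∈ F (x n) := fun n => htrans (x n) v (hvF n) hzFv
    have hznorm : ∀ n, ‖z - v‖ ≤ C * (1/2)^n := by
      intro n
      have b1 := keybound n z (hzn n)
      have b2 := keybound n v (hvF n)
      have htri : ‖z - v‖ ≤ ‖z - x n‖ + ‖v - x n‖ := by
        have := norm_add_le (z - x n) (x n - v)
        have h' : ‖x n - v‖ = ‖v - x n‖ := norm_sub_rev _ _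
        simp only [sub_add_sub_cancel] at this
        linarith
      have hpow : (0:ℝ) < 2 ^ n := by positivity
      have hCeq : C * (1/2)^n = 2 * (f y - m y) / (c * 2 ^ n) := by
        rw [hC]; field_simp; rw [mul_assoc, ← mul_pow]; norm_num
      rw [hCeq, le_div_iff₀ (by positivity : (0:ℝ) < c * 2 ^ n)]
      rw [le_div_iff₀ hpow] at b1 b2
      have hmul := mul_le_mul_of_nonneg_right htri (show (0:ℝ) ≤ c * 2 ^ n by positivity)
      nlinarith [hmul, b1, b2]
    have hzv : ‖z - v‖ ≤ 0 := ge_of_tendsto hb0 (Filter.Eventually.of_forall hznorm)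
    have : z = v := by
      have := le_antisymm hzv (norm_nonneg _)
      rwa [norm_sub_eq_zero_iff] at this
    rw [this] at hcon
    simp at hcon


set_option maxHeartbeats 2000000 in
/-- **Slope-based local error bound on a ball.**
The distance to the sublevel set is measured with `EMetric.infEdist`, which is
`+∞` on the empty set, matching the convention `dist(x, ∅) = +∞`. -/
theorem slope_local_error_bound
    {d : ℕ} (h : EuclideanSpace ℝ (Fin d) → EReal)
    (hlsc : LowerSemicontinuous h) (hbot : ∀ y, h y ≠ ⊥)
    (xb : EuclideanSpace ℝ (Fin d)) (hfin : h xb ≠ ⊤)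
    (α β κ ε : ℝ) (hκ : 0 < κ) (hε : 0 < ε)
    (hαβ : 0 < β - α) (hβε : β - α < ε / (2 * κ))
    (hslope : ∀ y, ‖y - xb‖ ≤ ε → (α : EReal) < h y → h y ≤ (β : EReal) →
      ((1 / κ : ℝ) : EReal) ≤ erealSlope h y) :
    ∀ y, ‖y - xb‖ ≤ ε / 2 → h y ≤ (β : EReal) →
      EMetric.infEdist y {z | h z ≤ (α : EReal)}
        ≤ ENNReal.ofReal (κ * max ((h y).toReal - α) 0) := by
  intro y hy hyβ
  classical
  by_cases hyα : h y ≤ (α : EReal)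
  · have : y ∈ {z | h z ≤ (α : EReal)} := hyα
    rw [show EMetric.infEdist y {z | h z ≤ (α : EReal)} = 0 from EMetric.infEdist_zero_of_mem this]
    exact zero_le
  push_neg at hyα
  have hαβR : α < β := by linarith
  have hκβ : κ * (β - α) < ε / 2 := by
    rw [lt_div_iff₀ (by linarith : (0:ℝ) < 2 * κ)] at hβε; nlinarith
  -- the clamped real-valued function
  set g : EuclideanSpace ℝ (Fin d) → ℝ :=
    fun z => ((h z ⊔ (α : EReal)) ⊓ (β : EReal)).toReal - α with hg
  clear_value g
  have hclamp_lb : ∀ z, (α : EReal) ≤ (h z ⊔ (α : EReal)) ⊓ (β : EReal) := fun z =>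
    le_inf le_sup_right (by exact_mod_cast hαβR.le)
  have hclamp_ub : ∀ z, (h z ⊔ (α : EReal)) ⊓ (β : EReal) ≤ (β : EReal) := fun z => inf_le_right
  have ne_bot : ∀ z, (h z ⊔ (α : EReal)) ⊓ (β : EReal) ≠ ⊥ := fun z =>
    (lt_of_lt_of_le (EReal.bot_lt_coe α) (hclamp_lb z)).ne'
  have ne_top : ∀ z, (h z ⊔ (α : EReal)) ⊓ (β : EReal) ≠ ⊤ := fun z =>
    (lt_of_le_of_lt (hclamp_ub z) (EReal.coe_lt_top β)).ne
  have hg0 : ∀ z, 0 ≤ g z := by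
    intro z
    have : α ≤ ((h z ⊔ (α : EReal)) ⊓ (β : EReal)).toReal := by
      have := EReal.toReal_le_toReal (hclamp_lb z) (EReal.coe_ne_bot α) (ne_top z)
      simpa using this
    simp only [hg]; linarith
  have hgub : ∀ z, g z ≤ β - α := by
    intro z
    have : ((h z ⊔ (α : EReal)) ⊓ (β : EReal)).toReal ≤ β := by
      have := EReal.toReal_le_toReal (hclamp_ub z) (ne_bot z) (EReal.coe_ne_top β)
      simpa using this
    simp only [hg]; linarith
  have hglsc : LowerSemicontinuous g := by
    intro z t ht
    rcases lt_or_ge t 0 with ht0 | ht0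
    · exact Filter.Eventually.of_forall fun w => lt_of_lt_of_le ht0 (hg0 w)
    · have h1 : ((t + α : ℝ) : EReal) < (h z ⊔ (α : EReal)) ⊓ (β : EReal) := by
        rw [← EReal.coe_toReal (ne_top z) (ne_bot z), EReal.coe_lt_coe_iff]
        simp only [hg] at ht
        linarith
      have h2 : ((t + α : ℝ) : EReal) < h z := by
        have h' := lt_of_lt_of_le h1 inf_le_left
        rcases lt_sup_iff.mp h' with h'' | h''
        · exact h''
        · exact absurd h'' (by rw [EReal.coe_lt_coe_iff]; linarith)
      have h3 : t + α < β := by have := hgub z; linarith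
      filter_upwards [hlsc z _ h2] with w hw
      have h4 : ((t + α : ℝ) : EReal) < (h w ⊔ (α : EReal)) ⊓ (β : EReal) :=
        lt_inf_iff.mpr ⟨lt_of_lt_of_le hw le_sup_left, by exact_mod_cast h3⟩
      have h5 : t + α < ((h w ⊔ (α : EReal)) ⊓ (β : EReal)).toReal := by
        rw [← EReal.coe_lt_coe_iff, EReal.coe_toReal (ne_top w) (ne_bot w)]
        exact h4
      show t < g w
      simp only [hg]; linarith
  -- facts about h y
  have hyT : h y ≠ ⊤ := (lt_of_le_of_lt hyβ (EReal.coe_lt_top β)).ne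
  set r : ℝ := (h y).toReal - α with hrdef
  clear_value r
  have hyco : (((h y).toReal : ℝ) : EReal) = h y := EReal.coe_toReal hyT (hbot y)
  have hr0 : 0 < r := by
    have : α < (h y).toReal := by
      rw [← EReal.coe_lt_coe_iff, hyco]; exact hyα
    simp only [hrdef]; linarith
  have hrβ : r ≤ β - α := by
    have : (h y).toReal ≤ β := by
      rw [← EReal.coe_le_coe_iff, hyco]; exact hyβ
    simp only [hrdef]; linarith
  have hgy : g y = r := by
    have h1 : h y ⊔ (α : EReal) = h y := sup_eq_left.mpr hyα.le
    have h2 : h y ⊓ (β : EReal) = h y := inf_eq_left.mpr hyβ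
    simp only [hg, h1, h2, hrdef]
  have hmax : max r 0 = r := max_eq_left hr0.le
  rw [hmax]
  -- limiting argument
  apply ENNReal.le_of_forall_pos_le_add
  intro δ hδ _
  have hδR : (0:ℝ) < (δ : ℝ) := hδ
  set M : ℝ := ε / 2 - κ * (β - α) with hMdef
  clear_value M
  have hM : 0 < M := by simp only [hMdef]; linarith
  set η : ℝ := min ((δ : ℝ) / r) (M / (β - α)) / 2 with hηdef
  clear_value η
  have hη : 0 < η := by
    have h1 : 0 < (δ : ℝ) / r := div_pos hδR hr0
    have h2 : 0 < M / (β - α) := div_pos hM hαβ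
    simp only [hηdef]
    have := lt_min h1 h2
    linarith
  set κ'' : ℝ := κ + η with hκ''def
  clear_value κ''
  have hκ''pos : 0 < κ'' := by simp only [hκ''def]; linarith
  have hηr : η * r ≤ (δ : ℝ) := by
    have h1 : η ≤ (δ : ℝ) / r := by
      simp only [hηdef]
      have := min_le_left ((δ : ℝ) / r) (M / (β - α))
      have : 0 ≤ min ((δ : ℝ) / r) (M / (β - α)) := le_min (div_pos hδR hr0).le (div_pos hM hαβ).le
      linarith [min_le_left ((δ : ℝ) / r) (M / (β - α))]
    calc η * r ≤ ((δ : ℝ) / r) * r := by nlinarith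
      _ = (δ : ℝ) := by field_simp
  have hκ''r2 : κ'' * r ≤ ε / 2 := by
    have h1 : η ≤ M / (β - α) := by
      simp only [hηdef]
      have h2 : 0 ≤ min ((δ : ℝ) / r) (M / (β - α)) := le_min (div_pos hδR hr0).le (div_pos hM hαβ).le
      linarith [min_le_right ((δ : ℝ) / r) (M / (β - α))]
    have h2 : η * (β - α) ≤ M := by
      calc η * (β - α) ≤ (M / (β - α)) * (β - α) := by nlinarith
        _ = M := by field_simp
    have h3 : κ'' * r ≤ κ'' * (β - α) := by nlinarith
    have h4 : κ'' * (β - α) = κ * (β - α) + η * (β - α) := by rw [hκ''def]; ring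
    have h5 : M = ε / 2 - κ * (β - α) := hMdef
    linarith
  set c : ℝ := 1 / κ'' with hcdef
  clear_value c
  have hc : 0 < c := by simp only [hcdef]; positivity
  obtain ⟨v, hv1, hv2⟩ := my_ekeland g hglsc hg0 c hc y
  have hvy : ‖v - y‖ ≤ κ'' * r := by
    have h1 : c * ‖v - y‖ ≤ r := by
      have := hg0 v; rw [hgy] at hv1; linarith
    have h2 := mul_le_mul_of_nonneg_left h1 hκ''pos.le
    have h3 : κ'' * (c * ‖v - y‖) = ‖v - y‖ := by rw [hcdef]; field_simp
    linarith
  have hvball : ‖v - xb‖ ≤ ε := by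
    have htri : ‖v - xb‖ ≤ ‖v - y‖ + ‖y - xb‖ := by
      have := norm_add_le (v - y) (y - xb)
      simpa using this
    linarith
  have hvβ : h v ≤ (β : EReal) := by
    by_contra hb
    push_neg at hb
    have hclv : (h v ⊔ (α : EReal)) ⊓ (β : EReal) = (β : EReal) :=
      inf_eq_right.mpr (le_sup_of_le_left hb.le)
    have hgv : g v = β - α := by simp only [hg, hclv, EReal.toReal_coe]
    have hc0 : c * ‖v - y‖ ≤ 0 := by
      rw [hgy, hgv] at hv1; linarith
    have hvn : ‖v - y‖ = 0 := by
      have := norm_nonneg (v - y); nlinarith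
    have hveq : v = y := by rwa [norm_sub_eq_zero_iff] at hvn
    rw [hveq] at hb
    exact absurd hyβ (not_le.mpr hb)
  have hvα : h v ≤ (α : EReal) := by
    by_contra hva
    push_neg at hva
    have hvT : h v ≠ ⊤ := (lt_of_le_of_lt hvβ (EReal.coe_lt_top β)).ne
    have hvco : (((h v).toReal : ℝ) : EReal) = h v := EReal.coe_toReal hvT (hbot v)
    have hgv : g v = (h v).toReal - α := by
      have h1 : h v ⊔ (α : EReal) = h v := sup_eq_left.mpr hva.le
      have h2 : h v ⊓ (β : EReal) = h v := inf_eq_left.mpr hvβ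
      simp only [hg, h1, h2]
    have hslb : erealSlope h v ≤ ((c : ℝ) : EReal) := by
      refine Filter.limsup_le_of_le (by isBoundedDefault) ?_
      have hev1 : ∀ᶠ z in 𝓝[≠] v, (α : EReal) < h z :=
        (hlsc v _ hva).filter_mono nhdsWithin_le_nhds
      filter_upwards [hev1, eventually_mem_nhdsWithin] with z hz hzne
      by_cases hzT : h z = ⊤
      · rw [hzT, EReal.sub_top]
        have hmax0 : max (⊥ : EReal) 0 = 0 := max_eq_right bot_le
        rw [hmax0, zero_mul]
        exact_mod_cast hc.le
      · have hzco : (((h z).toReal : ℝ) : EReal) = h z := EReal.coe_toReal hzT (hbot z)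
        have hkey : (h v).toReal - (h z).toReal ≤ c * ‖z - v‖ := by
          have h2 := hv2 z
          have hgz : g z ≤ (h z).toReal - α := by
            have h1 : h z ⊔ (α : EReal) = h z := sup_eq_left.mpr hz.le
            have hcl : (h z ⊔ (α : EReal)) ⊓ (β : EReal) ≤ h z := by
              rw [h1]; exact inf_le_left
            have h3 : ((h z ⊔ (α : EReal)) ⊓ (β : EReal)).toReal ≤ (h z).toReal :=
              EReal.toReal_le_toReal hcl (ne_bot z) hzT
            simp only [hg]; linarith
          rw [hgv] at h2
          linarith
        have hznv : z ≠ v := hzne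
        have hnp : 0 < ‖v - z‖ := by
          rw [norm_sub_rev]; exact norm_sub_pos_iff.mpr hznv
        rw [← hvco, ← hzco, ← EReal.coe_sub, ← EReal.coe_zero,
          ← EReal.coe_strictMono.monotone.map_max, ← EReal.coe_mul, EReal.coe_le_coe_iff]
        rw [← div_eq_mul_inv, div_le_iff₀ hnp]
        refine max_le ?_ (by positivity)
        rw [norm_sub_rev v z]
        exact hkey
      done
    have h1κ := hslope v hvball hva hvβ
    have h2 : ((1 / κ : ℝ) : EReal) ≤ ((c : ℝ) : EReal) := le_trans h1κ hslb
    rw [EReal.coe_le_coe_iff] at h2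
    simp only [hcdef] at h2
    have h3 : κ'' ≤ κ := le_of_one_div_le_one_div hκ h2
    simp only [hκ''def] at h3
    linarith
  have hvS : v ∈ {z | h z ≤ (α : EReal)} := hvα
  calc EMetric.infEdist y {z | h z ≤ (α : EReal)} ≤ edist y v :=
        EMetric.infEdist_le_edist_of_mem hvS
    _ = ENNReal.ofReal (dist y v) := edist_dist y v
    _ ≤ ENNReal.ofReal (κ * r + (δ : ℝ)) := by
        apply ENNReal.ofReal_le_ofReal
        rw [dist_eq_norm, norm_sub_rev]
        have : κ'' * r = κ * r + η * r := by simp only [hκ''def]; ring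
        linarith
    _ ≤ ENNReal.ofReal (κ * r) + ↑δ := by
        rw [ENNReal.ofReal_add (by positivity) hδR.le]
        simp [ENNReal.ofReal_coe_nnreal]
end

section
/- (Nondegenerate slope for the model implies quadratic set accuracy.) Let g : ℝ^d → ℝ ∪ {+∞} with X := {y : g(y) ≤ 0}, fix x̄ ∈ X and γ > 0, and let g_x̄ : ℝ^d → ℝ ∪ {+∞} be lower semicontinuous with |g_x̄(y) − g(y)| ≤ (γ/2)‖y − x̄‖² for all y (with g_x̄(y) = +∞ exactly when g(y) = +∞). Define G_x̄(y) := g_x̄(y) + (γ/2)‖y − x̄‖² and X_x̄ := {y : G_x̄(y) ≤ 0}. Assume there are constants r, κ, ε > 0 with 0 < r < ε/(2κ) such that the slope satisfies |∇G_x̄|(y) ≥ 1/κ for all y ∈ B(x̄, ε) with 0 < G_x̄(y) ≤ r. Then dist(y, X_x̄) ≤ γκ‖y − x̄‖² for all y ∈ X with ‖y − x̄‖ ≤ ν, where ν := min{ε/2, √(r/γ)}. -/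
open Metric Filter
open scoped Topology

lemma lsc_exists_min_on_compact {E : Type*} [MetricSpace E] {s : Set E}
    (hs : IsCompact s) (hne : s.Nonempty) {Φ : E → ℝ}
    (hΦ : LowerSemicontinuous Φ) (h0 : ∀ w, 0 ≤ Φ w) :
    ∃ z ∈ s, ∀ w ∈ s, Φ z ≤ Φ w := by
  set m := sInf (Φ '' s) with hm
  have hbdd : BddBelow (Φ '' s) := ⟨0, by rintro _ ⟨w, -, rfl⟩; exact h0 w⟩
  have hnem : (Φ '' s).Nonempty := hne.image _
  have hseq : ∀ n : ℕ, ∃ u ∈ s, Φ u < m + 1 / (n + 1) := by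
    intro n
    have hpos : (0 : ℝ) < 1 / (n + 1) := by positivity
    obtain ⟨x, ⟨u, hu, rfl⟩, hx⟩ := Real.lt_sInf_add_pos hnem hpos
    exact ⟨u, hu, hx⟩
  choose u hu₁ hu₂ using hseq
  obtain ⟨z, hz, φ, hφ, hconv⟩ := hs.tendsto_subseq hu₁
  refine ⟨z, hz, fun w hw => ?_⟩
  have hzm : Φ z ≤ m := by
    by_contra h
    push_neg at h
    obtain ⟨c, hc1, hc2⟩ := exists_between h
    have hev : ∀ᶠ n in atTop, c < Φ (u (φ n)) :=
      hconv.eventually (hΦ z c hc2)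
    obtain ⟨N, hN⟩ : ∃ N : ℕ, 1 / ((N : ℝ) + 1) < c - m :=
      exists_nat_one_div_lt (by linarith)
    obtain ⟨n, hnN, hn⟩ := (hev.and (eventually_ge_atTop N)).exists
    have h1 : Φ (u (φ n)) < m + 1 / ((φ n : ℝ) + 1) := hu₂ (φ n)
    have h2 : 1 / ((φ n : ℝ) + 1) ≤ 1 / ((N : ℝ) + 1) := by
      apply one_div_le_one_div_of_le (by positivity)
      have : (N : ℝ) ≤ (φ n : ℝ) := by
        exact_mod_cast hn.trans (hφ.le_apply)
      linarith
    linarith [hnN]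
  exact hzm.trans (csInf_le hbdd ⟨w, hw, rfl⟩)

lemma ereal_coe_max (a b : ℝ) : ((max a b : ℝ) : EReal) = max (a : EReal) (b : EReal) := by
  rcases le_total a b with h | h
  · simp [max_eq_right h, max_eq_right (EReal.coe_le_coe_iff.2 h)]
  · simp [max_eq_left h, max_eq_left (EReal.coe_le_coe_iff.2 h)]


set_option maxHeartbeats 1000000 in
/-- **Nondegenerate slope for the model implies quadratic set
accuracy.** -/
theorem nondegenerate_slope_implies_set_accuracy
    {d : ℕ} (g gx : EuclideanSpace ℝ (Fin d) → EReal)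
    (hgbot : ∀ y, g y ≠ ⊥) (hgxbot : ∀ y, gx y ≠ ⊥)
    (hgxlsc : LowerSemicontinuous gx)
    (γ κ r ε : ℝ) (hγ : 0 < γ) (hκ : 0 < κ) (hr : 0 < r) (hε : 0 < ε)
    (hrε : r < ε / (2 * κ))
    (xb : EuclideanSpace ℝ (Fin d)) (hxb : g xb ≤ 0)
    (htop : ∀ y, (gx y = ⊤ ↔ g y = ⊤))
    (happ₁ : ∀ y, gx y ≤ g y + ((γ / 2 * ‖y - xb‖ ^ 2 : ℝ) : EReal))
    (happ₂ : ∀ y, g y ≤ gx y + ((γ / 2 * ‖y - xb‖ ^ 2 : ℝ) : EReal))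
    (hslope : ∀ y, ‖y - xb‖ ≤ ε → (0 : EReal) < Gmodel gx γ xb y →
      Gmodel gx γ xb y ≤ (r : EReal) →
      ((1 / κ : ℝ) : EReal) ≤ erealSlope (Gmodel gx γ xb) y) :
    ∀ y, g y ≤ 0 → ‖y - xb‖ ≤ min (ε / 2) (Real.sqrt (r / γ)) →
      infDist y {z | Gmodel gx γ xb z ≤ 0} ≤ γ * κ * ‖y - xb‖ ^ 2 := by
  intro y hgy hynear
  set G : EuclideanSpace ℝ (Fin d) → EReal := Gmodel gx γ xb with hGdef
  set X : Set (EuclideanSpace ℝ (Fin d)) := {z | G z ≤ 0} with hXdef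
  set t : ℝ := ‖y - xb‖ with htdef
  have ht0 : 0 ≤ t := norm_nonneg _
  have hty : t ≤ ε / 2 := hynear.trans (min_le_left _ _)
  have ht2 : γ * t ^ 2 ≤ r := by
    have h1 : t ≤ Real.sqrt (r / γ) := hynear.trans (min_le_right _ _)
    have h2 : t ^ 2 ≤ r / γ := by
      calc t ^ 2 ≤ Real.sqrt (r / γ) ^ 2 := by
            exact pow_le_pow_left₀ ht0 h1 2
        _ = r / γ := Real.sq_sqrt (le_of_lt (div_pos hr hγ))
    calc γ * t ^ 2 ≤ γ * (r / γ) := by nlinarith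
      _ = r := by field_simp
  have hGbot : ∀ w, G w ≠ ⊥ := by
    intro w h
    simp only [hGdef, Gmodel] at h
    rcases EReal.add_eq_bot_iff.1 h with h1 | h1
    · exact hgxbot w h1
    · exact EReal.coe_ne_bot _ h1
  have hGlsc : LowerSemicontinuous G := by
    have hq : Continuous fun w : EuclideanSpace ℝ (Fin d) =>
        ((γ / 2 * ‖w - xb‖ ^ 2 : ℝ) : EReal) := by
      apply continuous_coe_real_ereal.comp
      exact continuous_const.mul (((continuous_id.sub continuous_const).norm).pow 2)
    exact hgxlsc.add' hq.lowerSemicontinuous fun x =>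
      EReal.continuousAt_add (Or.inr (EReal.coe_ne_bot _)) (Or.inr (EReal.coe_ne_top _))
  -- G y ≤ γ t²
  have hGy_le : G y ≤ ((γ * t ^ 2 : ℝ) : EReal) := by
    have h1 : G y ≤ (g y + ((γ / 2 * t ^ 2 : ℝ) : EReal)) + ((γ / 2 * t ^ 2 : ℝ) : EReal) :=
      add_le_add_left (happ₁ y) _
    have h2 : (g y + ((γ / 2 * t ^ 2 : ℝ) : EReal)) + ((γ / 2 * t ^ 2 : ℝ) : EReal)
        ≤ ((0 : EReal) + ((γ / 2 * t ^ 2 : ℝ) : EReal)) + ((γ / 2 * t ^ 2 : ℝ) : EReal) := by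
      exact add_le_add_left (add_le_add_left hgy _) _
    refine h1.trans (h2.trans ?_)
    rw [zero_add, ← EReal.coe_add]
    exact EReal.coe_le_coe_iff.2 (by ring_nf; exact le_refl _)
  have hGy_r : G y ≤ (r : EReal) := hGy_le.trans (EReal.coe_le_coe_iff.2 ht2)
  -- xb ∈ X
  have hxbX : xb ∈ X := by
    have h0 : G xb = gx xb := by
      simp [hGdef, Gmodel]
    have h1 : gx xb ≤ g xb + ((γ / 2 * ‖xb - xb‖ ^ 2 : ℝ) : EReal) := happ₁ xb
    simp only [sub_self, norm_zero, ne_eq, OfNat.ofNat_ne_zero, not_false_eq_true, zero_pow,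
      mul_zero, EReal.coe_zero, add_zero] at h1
    show G xb ≤ 0
    rw [h0]
    exact h1.trans hxb
  have hXne : X.Nonempty := ⟨xb, hxbX⟩
  -- the truncated real-valued function
  set V : EuclideanSpace ℝ (Fin d) → EReal := fun w => min (max (G w) 0) (r : EReal) with hVdef
  set F : EuclideanSpace ℝ (Fin d) → ℝ := fun w => (V w).toReal with hFdef
  have hr' : (0 : EReal) ≤ (r : EReal) := by exact_mod_cast hr.le
  have hV0 : ∀ w, 0 ≤ V w := fun w => le_min (le_max_right _ _) hr'
  have hVr : ∀ w, V w ≤ (r : EReal) := fun w => min_le_right _ _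
  have hVtop : ∀ w, V w ≠ ⊤ := fun w => ne_top_of_le_ne_top (EReal.coe_ne_top r) (hVr w)
  have hVbot : ∀ w, V w ≠ ⊥ := fun w =>
    ((EReal.bot_lt_zero).trans_le (hV0 w)).ne'
  have hFV : ∀ w, (F w : EReal) = V w := fun w => EReal.coe_toReal (hVtop w) (hVbot w)
  have hF0 : ∀ w, 0 ≤ F w := fun w => by
    have := hV0 w
    rw [← hFV w] at this
    exact_mod_cast this
  have hFr : ∀ w, F w ≤ r := fun w => by
    have := hVr w
    rw [← hFV w] at this
    exact_mod_cast this
  have hFG : ∀ w, 0 < G w → G w ≤ (r : EReal) → (F w : EReal) = G w := by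
    intro w h1 h2
    rw [hFV]
    simp only [hVdef, max_eq_left h1.le, min_eq_left h2]
  -- lower semicontinuity of F
  have hVlsc : LowerSemicontinuous V := by
    intro x c hc
    have hcr : c < (r : EReal) := hc.trans_le (hVr x)
    rcases lt_or_ge c 0 with hc0 | hc0
    · exact Filter.Eventually.of_forall fun w => hc0.trans_le (hV0 w)
    · have hcG : c < G x := by
        have h1 : c < max (G x) 0 := hc.trans_le (min_le_left _ _)
        rcases le_total (G x) 0 with hGx | hGx
        · rw [max_eq_right hGx] at h1
          exact absurd h1 (not_lt.2 hc0)
        · rwa [max_eq_left hGx] at h1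
      filter_upwards [hGlsc x c hcG] with w hw
      exact lt_min (hw.trans_le (le_max_left _ _)) hcr
  have hFlsc : LowerSemicontinuous F := by
    intro x c hc
    have hc' : ((c : ℝ) : EReal) < V x := by
      rw [← hFV x]
      exact_mod_cast hc
    filter_upwards [hVlsc x _ hc'] with w hw
    have h2 : ((c : ℝ) : EReal) < (F w : EReal) := by rw [hFV w]; exact hw
    exact_mod_cast h2
  -- main case split
  rcases le_or_gt (G y) 0 with hy0 | hy0
  · have hyX : y ∈ X := hy0
    rw [infDist_zero_of_mem hyX]
    positivity
  · -- 0 < G y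
    have hFyG : (F y : EReal) = G y := hFG y hy0 hGy_r
    have ha_pos : 0 < F y := by
      have : (0 : EReal) < (F y : EReal) := by rw [hFyG]; exact hy0
      exact_mod_cast this
    have ha_le : F y ≤ γ * t ^ 2 := by
      have : (F y : EReal) ≤ ((γ * t ^ 2 : ℝ) : EReal) := by rw [hFyG]; exact hGy_le
      exact_mod_cast this
    by_contra hcon
    push_neg at hcon
    set D := infDist y X with hDdef
    have hκa1 : κ * F y < D := by nlinarith
    have hκa2 : κ * F y < ε / 2 := by
      have h1 : κ * r < ε / 2 := by
        have h2 := (lt_div_iff₀ (by positivity : (0:ℝ) < 2 * κ)).1 hrε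
        nlinarith
      nlinarith [hFr y]
    set lam : ℝ := (κ * F y + min (ε / 2) D) / 2 with hlamdef
    have hlam1 : κ * F y < lam := by
      have := lt_min hκa2 hκa1
      simp only [hlamdef]
      linarith [this]
    have hlam2 : lam < ε / 2 := by
      have h1 : min (ε / 2) D ≤ ε / 2 := min_le_left _ _
      simp only [hlamdef]; linarith [hκa2]
    have hlam3 : lam < D := by
      have h1 : min (ε / 2) D ≤ D := min_le_right _ _
      simp only [hlamdef]; linarith [hκa1]
    have hlam0 : 0 < lam := lt_trans (by positivity) hlam1
    set δ : ℝ := F y / lam with hδdef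
    have hδ0 : 0 < δ := div_pos ha_pos hlam0
    have hδκ : δ < 1 / κ := by
      rw [hδdef, div_lt_div_iff₀ hlam0 hκ]
      nlinarith
    -- minimize F + δ dist · y over closed ball
    obtain ⟨z, hzball, hzmin⟩ := lsc_exists_min_on_compact
      (Φ := fun w => F w + δ * dist w y)
      (isCompact_closedBall y lam) ⟨y, mem_closedBall_self hlam0.le⟩
      (hFlsc.add ((continuous_const.mul
        ((continuous_id.dist continuous_const : Continuous fun w => dist w y)
          )).lowerSemicontinuous))
      (fun w => add_nonneg (hF0 w) (mul_nonneg hδ0.le dist_nonneg))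
    have hi : F z + δ * dist z y ≤ F y := by
      have := hzmin y (mem_closedBall_self hlam0.le)
      simpa [dist_self] using this
    have hEk : ∀ w, F z ≤ F w + δ * dist w z := by
      intro w
      have h3 : dist w y ≤ dist w z + dist z y := dist_triangle w z y
      have h4 : δ * (dist w z + dist z y) = δ * dist w z + δ * dist z y := by ring
      have h5 : δ * dist w y ≤ δ * dist w z + δ * dist z y := by
        rw [← h4]
        exact mul_le_mul_of_nonneg_left h3 hδ0.le
      rcases le_or_gt (dist w y) lam with hw | hw
      · have h1 := hzmin w (by rwa [mem_closedBall])
        linarith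
      · have h2 : F y = δ * lam := by
          rw [hδdef]; field_simp
        have h6 : δ * lam ≤ δ * dist w y := mul_le_mul_of_nonneg_left hw.le hδ0.le
        linarith [hF0 w]
    have hdzy : dist z y ≤ lam := mem_closedBall.1 hzball
    have hdzyD : dist z y < D := lt_of_le_of_lt hdzy hlam3
    have hznX : z ∉ X := by
      intro hzX
      have h1 : D ≤ dist y z := infDist_le_dist_of_mem hzX
      rw [dist_comm] at h1
      exact absurd h1 (not_le.2 hdzyD)
    have hGz_pos : 0 < G z := not_le.1 hznX
    have hGz_r : G z ≤ (r : EReal) := by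
      by_contra hzr
      push_neg at hzr
      have hVz : V z = (r : EReal) := by
        have h1 : (0 : EReal) ≤ G z := le_of_lt (lt_trans (by exact_mod_cast hr) hzr)
        simp only [hVdef, max_eq_left h1, min_eq_right hzr.le]
      have hFz : F z = r := by
        rw [hFdef]
        simp only [hVz, EReal.toReal_coe]
      have hdz0 : dist z y ≤ 0 := by nlinarith [hFr y]
      have hzy : z = y := by
        have := dist_le_zero.1 hdz0
        exact this
      rw [hzy] at hzr
      exact absurd hGy_r (not_le.2 hzr)
    have hFzG : (F z : EReal) = G z := hFG z hGz_pos hGz_r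
    have hzε : ‖z - xb‖ ≤ ε := by
      have h1 : dist z xb ≤ dist z y + dist y xb := dist_triangle z y xb
      rw [dist_eq_norm, dist_eq_norm] at h1
      rw [← dist_eq_norm] at h1
      calc ‖z - xb‖ = dist z xb := (dist_eq_norm _ _).symm
        _ ≤ dist z y + t := by rw [dist_eq_norm z xb] at h1; exact h1
        _ ≤ lam + ε / 2 := add_le_add hdzy hty
        _ ≤ ε := by linarith
    have hsl := hslope z hzε hGz_pos hGz_r
    -- slope upper bound
    have hρ : 0 < D - dist z y := by linarith
    have hclaim : ∀ᶠ w in 𝓝[≠] z,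
        max (G z - G w) 0 * ((‖z - w‖⁻¹ : ℝ) : EReal) ≤ ((δ : ℝ) : EReal) := by
      filter_upwards [nhdsWithin_le_nhds (ball_mem_nhds z hρ), self_mem_nhdsWithin]
        with w hwball hwz
      have hwz' : w ≠ z := hwz
      have hGw_pos : 0 < G w := by
        have hwX : w ∉ X := by
          intro hwX
          have h1 : D ≤ dist y w := infDist_le_dist_of_mem hwX
          have h2 : dist w y ≤ dist w z + dist z y := dist_triangle w z y
          have h3 : dist w z < D - dist z y := by
            rw [mem_ball] at hwball
            exact hwball
          rw [dist_comm] at h1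
          linarith
        exact not_le.1 hwX
      have hnorm_pos : 0 < ‖z - w‖ := by
        rw [norm_pos_iff, sub_ne_zero]
        exact fun h => hwz' h.symm
      rcases eq_or_ne (G w) ⊤ with hGwt | hGwt
      · rw [← hFzG, hGwt, EReal.sub_top]
        rw [max_eq_right bot_le, zero_mul]
        exact_mod_cast hδ0.le
      · set b : ℝ := (G w).toReal with hbdef
        have hb : (b : EReal) = G w := EReal.coe_toReal hGwt (hGbot w)
        have hFwb : F w ≤ b := by
          have h1 : V w ≤ G w := by
            refine (min_le_left _ _).trans ?_
            rw [max_eq_left hGw_pos.le]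
          have := EReal.toReal_le_toReal h1 (hVbot w) hGwt
          rwa [hFdef]
        have hkey : F z - b ≤ δ * ‖z - w‖ := by
          have h1 := hEk w
          have h2 : dist w z = ‖z - w‖ := by
            rw [dist_eq_norm, norm_sub_rev]
          rw [h2] at h1
          linarith
        have heq : max (G z - G w) 0 = ((max (F z - b) 0 : ℝ) : EReal) := by
          rw [← hFzG, ← hb, ← EReal.coe_sub, ereal_coe_max, EReal.coe_zero]
        rw [heq, ← EReal.coe_mul]
        apply EReal.coe_le_coe_iff.2
        have h4 : max (F z - b) 0 ≤ δ * ‖z - w‖ :=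
          max_le hkey (by positivity)
        calc max (F z - b) 0 * ‖z - w‖⁻¹ ≤ δ * ‖z - w‖ * ‖z - w‖⁻¹ := by
              apply mul_le_mul_of_nonneg_right h4 (by positivity)
          _ = δ := by field_simp
    have hlimsup : erealSlope G z ≤ ((δ : ℝ) : EReal) := by
      rw [erealSlope]
      exact Filter.limsup_le_of_le (by isBoundedDefault) hclaim
    have hfinal : ((1 / κ : ℝ) : EReal) ≤ ((δ : ℝ) : EReal) := hsl.trans hlimsup
    have : (1 / κ : ℝ) ≤ δ := EReal.coe_le_coe_iff.1 hfinal
    linarith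
end
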